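/- Factorization Forest theorem of Simon: for every finite monoid S, every finite alphabet A, and every morphism α : A* → S, every word w ∈ A* has an α-factorization forest of height at most 3|S|. -/

import Mathlib

/-- Decomposition trees: leaves are labeled by a single letter (`some a`) or the
empty word (`none`); an inner node's label is the concatenation of its children's labels. -/
inductive DTree (A : Type) : Type
  | leaf : Option A → DTree A
  | node : List (DTree A) → DTree A

namespace DTree

/-- The word (label) of a tree. -/
def word {A : Type} : DTree A → List A
  | .leaf none => []
  | .leaf (some a) => [a]
  | .node ts => wordList ts
where wordList {A : Type} : List (DTree A) → List A
  | [] => []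
  | t :: ts => word t ++ wordList ts

/-- Height: number of edges on a longest root-to-leaf path. -/
def height {A : Type} : DTree A → ℕ
  | .leaf _ => 0
  | .node ts => heightList ts + 1
where heightList {A : Type} : List (DTree A) → ℕ
  | [] => 0
  | t :: ts => max (height t) (heightList ts)

/-- `t` is an α-factorization forest: every node of degree > 2 corresponds to an
idempotent rule. -/
def IsFF {A S : Type} [Monoid S] (α : List A → S) : DTree A → Prop
  | .leaf _ => True
  | .node ts =>
      (2 < ts.length → ∃ e : S, e * e = e ∧ ∀ t ∈ ts, α t.word = e) ∧ listFF α ts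
where listFF {A S : Type} [Monoid S] (α : List A → S) : List (DTree A) → Prop
  | [] => True
  | t :: ts => IsFF α t ∧ listFF α ts

/-- The tree contains a node of degree at least `ℓ`. -/
def hasBigNode {A : Type} (ℓ : ℕ) : DTree A → Prop
  | .leaf _ => False
  | .node ts => ℓ ≤ ts.length ∨ listBig ℓ ts
where listBig {A : Type} (ℓ : ℕ) : List (DTree A) → Prop
  | [] => False
  | t :: ts => hasBigNode ℓ t ∨ listBig ℓ ts

end DTree

namespace SimonFF

set_option linter.unusedVariables false
set_option linter.unusedSectionVars false

section Algebra
variable {S : Type} [Monoid S]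

def leR (x y : S) : Prop := ∃ u, x = y * u
def leL (x y : S) : Prop := ∃ u, x = u * y
def leJ (x y : S) : Prop := ∃ u v, x = u * y * v

lemma leR_refl (x : S) : leR x x := ⟨1, (mul_one x).symm⟩
lemma leL_refl (x : S) : leL x x := ⟨1, (one_mul x).symm⟩
lemma leJ_refl (x : S) : leJ x x := ⟨1, 1, by simp⟩

lemma leR_trans {x y z : S} (h1 : leR x y) (h2 : leR y z) : leR x z := by
  obtain ⟨u, rfl⟩ := h1; obtain ⟨v, rfl⟩ := h2
  exact ⟨v * u, by simp [mul_assoc]⟩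
lemma leL_trans {x y z : S} (h1 : leL x y) (h2 : leL y z) : leL x z := by
  obtain ⟨u, rfl⟩ := h1; obtain ⟨v, rfl⟩ := h2
  exact ⟨u * v, by simp [mul_assoc]⟩
lemma leJ_trans {x y z : S} (h1 : leJ x y) (h2 : leJ y z) : leJ x z := by
  obtain ⟨u, v, rfl⟩ := h1; obtain ⟨a, b, rfl⟩ := h2
  exact ⟨u * a, b * v, by simp [mul_assoc]⟩

lemma leR_leJ {x y : S} (h : leR x y) : leJ x y := by
  obtain ⟨u, rfl⟩ := h; exact ⟨1, u, by simp⟩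
lemma leL_leJ {x y : S} (h : leL x y) : leJ x y := by
  obtain ⟨u, rfl⟩ := h; exact ⟨u, 1, by simp⟩

lemma leR_mul (x u : S) : leR (x * u) x := ⟨u, rfl⟩
lemma leL_mul (u x : S) : leL (u * x) x := ⟨u, rfl⟩
lemma leJ_mul (u x v : S) : leJ (u * x * v) x := ⟨u, v, rfl⟩

def eqR (x y : S) : Prop := leR x y ∧ leR y x
def eqL (x y : S) : Prop := leL x y ∧ leL y x
def eqJ (x y : S) : Prop := leJ x y ∧ leJ y x

lemma eqR_refl (x : S) : eqR x x := ⟨leR_refl x, leR_refl x⟩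
lemma eqL_refl (x : S) : eqL x x := ⟨leL_refl x, leL_refl x⟩
lemma eqJ_refl (x : S) : eqJ x x := ⟨leJ_refl x, leJ_refl x⟩
lemma eqR_symm {x y : S} (h : eqR x y) : eqR y x := ⟨h.2, h.1⟩
lemma eqL_symm {x y : S} (h : eqL x y) : eqL y x := ⟨h.2, h.1⟩
lemma eqJ_symm {x y : S} (h : eqJ x y) : eqJ y x := ⟨h.2, h.1⟩
lemma eqR_trans {x y z : S} (h1 : eqR x y) (h2 : eqR y z) : eqR x z :=
  ⟨leR_trans h1.1 h2.1, leR_trans h2.2 h1.2⟩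
lemma eqL_trans {x y z : S} (h1 : eqL x y) (h2 : eqL y z) : eqL x z :=
  ⟨leL_trans h1.1 h2.1, leL_trans h2.2 h1.2⟩
lemma eqJ_trans {x y z : S} (h1 : eqJ x y) (h2 : eqJ y z) : eqJ x z :=
  ⟨leJ_trans h1.1 h2.1, leJ_trans h2.2 h1.2⟩
lemma eqR_eqJ {x y : S} (h : eqR x y) : eqJ x y := ⟨leR_leJ h.1, leR_leJ h.2⟩
lemma eqL_eqJ {x y : S} (h : eqL x y) : eqJ x y := ⟨leL_leJ h.1, leL_leJ h.2⟩

variable [Fintype S]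

lemma exists_idem_pow (x : S) : ∃ n : ℕ, 0 < n ∧ x ^ n * x ^ n = x ^ n := by
  obtain ⟨i, j, hne, hij'⟩ := Finite.exists_ne_map_eq_of_infinite (fun n : ℕ => x ^ n)
  have hij : x ^ i = x ^ j := hij'
  clear hij'
  wlog hlt : i < j generalizing i j
  · exact this j i hne.symm hij.symm (by omega)
  have key : ∀ m : ℕ, i ≤ m → x ^ m = x ^ (m + (j - i)) := by
    intro m hm
    have h1 : x ^ m = x ^ i * x ^ (m - i) := by
      rw [← pow_add]; congr 1; omega
    rw [h1, hij, ← pow_add]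
    congr 1; omega
  have step : ∀ t m : ℕ, i ≤ m → x ^ m = x ^ (m + t * (j - i)) := by
    intro t
    induction t with
    | zero => simp
    | succ t ih =>
      intro m hm
      rw [ih m hm, key (m + t * (j-i)) (by omega)]
      congr 1; ring
  have hd : 0 < j - i := by omega
  refine ⟨(i+1) * (j - i), by positivity, ?_⟩
  have h2 : i ≤ (i+1) * (j-i) := by nlinarith
  rw [← pow_add]
  exact (step (i+1) ((i+1)*(j-i)) h2).symm

lemma mul_eq_one_comm' {a b : S} (h : a * b = 1) : b * a = 1 := by
  have hsurj : Function.Surjective (fun x : S => a * x) := by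
    intro y
    refine ⟨b * y, ?_⟩
    show a * (b * y) = y
    rw [← mul_assoc, h, one_mul]
  have hinj : Function.Injective (fun x : S => a * x) :=
    Finite.injective_iff_surjective.mpr hsurj
  have : a * (b * a) = a * 1 := by rw [← mul_assoc, h, one_mul, mul_one]
  exact hinj this

lemma isUnit_of_leJ_one {t : S} (h : leJ 1 t) : IsUnit t := by
  obtain ⟨u, v, huv⟩ := h
  have h1 : (u * t) * v = 1 := huv.symm
  have h2 : v * (u * t) = 1 := mul_eq_one_comm' h1
  have h3 : (v * u) * t = 1 := by rw [mul_assoc]; exact h2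
  have h4 : t * (v * u) = 1 := mul_eq_one_comm' h3
  exact ⟨⟨t, v * u, h4, h3⟩, rfl⟩

/-- Stability: x ≤_R y and y ≤_J x imply y ≤_R x. -/
lemma stabR {x y : S} (h1 : leR x y) (h2 : leJ y x) : leR y x := by
  obtain ⟨u, hu⟩ := h1
  obtain ⟨a, b, hab⟩ := h2
  have key : y = a * y * (u * b) := by
    conv_lhs => rw [hab, hu]
    simp [mul_assoc]
  have iter : ∀ k : ℕ, y = a ^ k * y * (u * b) ^ k := by
    intro k
    induction k with
    | zero => simp
    | succ k ih =>
      conv_lhs => rw [key, ih]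
      rw [pow_succ', pow_succ]
      simp [mul_assoc]
  obtain ⟨n, hn, hidem⟩ := exists_idem_pow (u * b)
  have h5 : y * (u*b)^n = y := by
    conv_lhs => rw [iter n]
    rw [mul_assoc, hidem, ← iter n]
  have h6 : y = (y * u) * (b * (u*b)^(n-1)) := by
    have hsp : (u*b)^n = (u*b) * (u*b)^(n-1) := by
      conv_lhs => rw [show n = 1 + (n-1) by omega, pow_add, pow_one]
    conv_lhs => rw [← h5, hsp]
    simp [mul_assoc]
  exact ⟨b * (u*b)^(n-1), by rw [← hu] at h6; exact h6⟩

lemma stabL {x y : S} (h1 : leL x y) (h2 : leJ y x) : leL y x := by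
  obtain ⟨u, hu⟩ := h1
  obtain ⟨a, b, hab⟩ := h2
  have key : y = (a * u) * y * b := by
    conv_lhs => rw [hab, hu]
    simp [mul_assoc]
  have iter : ∀ k : ℕ, y = (a * u) ^ k * y * b ^ k := by
    intro k
    induction k with
    | zero => simp
    | succ k ih =>
      conv_lhs => rw [key, ih]
      rw [pow_succ', pow_succ]
      simp [mul_assoc]
  obtain ⟨n, hn, hidem⟩ := exists_idem_pow (a * u)
  have h5 : (a*u)^n * y = y := by
    conv_lhs => rw [iter n]
    conv_lhs => rw [show (a*u)^n * ((a*u)^n * y * b^n) = ((a*u)^n * (a*u)^n) * y * b^n by simp [mul_assoc], hidem]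
    rw [← iter n]
  have h6 : y = ((a*u)^(n-1) * a) * (u * y) := by
    have hsp : (a*u)^n = (a*u)^(n-1) * (a*u) := by
      conv_lhs => rw [show n = (n-1) + 1 by omega, pow_add, pow_one]
    conv_lhs => rw [← h5, hsp]
    simp [mul_assoc]
  exact ⟨(a*u)^(n-1) * a, by rw [← hu] at h6; exact h6⟩

lemma eqR_of_leR_eqJ {x y : S} (h1 : leR x y) (h2 : eqJ x y) : eqR x y :=
  ⟨h1, stabR h1 h2.2⟩
lemma eqL_of_leL_eqJ {x y : S} (h1 : leL x y) (h2 : eqJ x y) : eqL x y :=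
  ⟨h1, stabL h1 h2.2⟩

/-- In a finite monoid, J-equivalent elements have a common R/L representative. -/
lemma exists_eqR_eqL {x y : S} (h : eqJ x y) : ∃ z, eqR z x ∧ eqL z y := by
  obtain ⟨u, v, huv⟩ := h.2  -- y = u * x * v
  have hyLxv : leL y (x * v) := ⟨u, by rw [huv, mul_assoc]⟩
  refine ⟨x * v, ?_, ?_⟩
  · have h1 : leR (x * v) x := leR_mul x v
    have h2 : leJ x (x * v) := leJ_trans h.1 (leL_leJ hyLxv)
    exact ⟨h1, stabR h1 h2⟩
  · have h2 : leJ (x * v) y := leJ_trans (leR_leJ (leR_mul x v)) h.1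
    exact eqL_symm ⟨hyLxv, stabL hyLxv h2⟩

lemma idem_unique {e f : S} (he : e * e = e) (hf : f * f = f)
    (hR : eqR e f) (hL : eqL e f) : e = f := by
  obtain ⟨u', hu'⟩ := hR.2  -- f = e * u'
  obtain ⟨v', hv'⟩ := hL.1  -- e = v' * f
  have h1 : e * f = e := by rw [hv', mul_assoc, hf]
  have h2 : e * f = f := by rw [hu', ← mul_assoc, he]
  rw [← h1, h2]

end Algebra
end SimonFF
namespace SimonFF
open DTree

set_option linter.unusedVariables false
set_option linter.unusedSectionVars false

section DTreeHelpers
variable {A S : Type} [Monoid S] (α : List A → S)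

lemma word_leaf_none : (DTree.leaf (A := A) none).word = [] := rfl
lemma word_leaf_some (a : A) : (DTree.leaf (some a)).word = [a] := rfl

lemma wordList_eq (ts : List (DTree A)) :
    DTree.word.wordList ts = (ts.map DTree.word).flatten := by
  induction ts with
  | nil => rfl
  | cons t ts ih => simp [DTree.word.wordList, ih]

lemma word_node (ts : List (DTree A)) :
    (DTree.node ts).word = (ts.map DTree.word).flatten := by
  rw [show (DTree.node ts).word = DTree.word.wordList ts from rfl, wordList_eq]

lemma height_leaf (o : Option A) : (DTree.leaf o).height = 0 := rfl

lemma heightList_le {ts : List (DTree A)} {H : ℕ}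
    (h : ∀ t ∈ ts, t.height ≤ H) : DTree.height.heightList ts ≤ H := by
  induction ts with
  | nil => simp [DTree.height.heightList]
  | cons t ts ih =>
    simp only [DTree.height.heightList, max_le_iff]
    exact ⟨h t (by simp), ih (fun t' ht' => h t' (by simp [ht']))⟩

lemma height_node_le {ts : List (DTree A)} {H : ℕ}
    (h : ∀ t ∈ ts, t.height ≤ H) : (DTree.node ts).height ≤ H + 1 := by
  rw [show (DTree.node ts).height = DTree.height.heightList ts + 1 from rfl]
  exact Nat.add_le_add_right (heightList_le h) 1

lemma isFF_leaf (o : Option A) : DTree.IsFF α (DTree.leaf o) := trivial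

lemma listFF_iff (ts : List (DTree A)) :
    DTree.IsFF.listFF α ts ↔ ∀ t ∈ ts, DTree.IsFF α t := by
  induction ts with
  | nil => simp [DTree.IsFF.listFF]
  | cons t ts ih => simp [DTree.IsFF.listFF, ih]

lemma isFF_node_iff (ts : List (DTree A)) :
    DTree.IsFF α (DTree.node ts) ↔
      ((2 < ts.length → ∃ e : S, e * e = e ∧ ∀ t ∈ ts, α t.word = e) ∧
        ∀ t ∈ ts, DTree.IsFF α t) := by
  rw [show DTree.IsFF α (DTree.node ts) =
    ((2 < ts.length → ∃ e : S, e * e = e ∧ ∀ t ∈ ts, α t.word = e) ∧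
      DTree.IsFF.listFF α ts) from rfl, listFF_iff]

lemma isFF_node2 {t₁ t₂ : DTree A} (h₁ : DTree.IsFF α t₁) (h₂ : DTree.IsFF α t₂) :
    DTree.IsFF α (DTree.node [t₁, t₂]) := by
  rw [isFF_node_iff]
  exact ⟨by intro h; simp at h, by simp [h₁, h₂]⟩

lemma word_node2 (t₁ t₂ : DTree A) :
    (DTree.node [t₁, t₂]).word = t₁.word ++ t₂.word := by
  simp [word_node]

lemma height_node2_le {t₁ t₂ : DTree A} {H : ℕ} (h₁ : t₁.height ≤ H) (h₂ : t₂.height ≤ H) :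
    (DTree.node [t₁, t₂]).height ≤ H + 1 :=
  height_node_le (by
    intro t ht
    simp only [List.mem_cons, List.mem_singleton, List.not_mem_nil, or_false] at ht
    rcases ht with rfl | rfl <;> assumption)

end DTreeHelpers
end SimonFF

namespace SimonFF
set_option linter.unusedVariables false
set_option linter.unusedSectionVars false

section Chunks
variable {β : Type}

def chunksBy (p : β → Bool) : List β → List (List β)
  | [] => []
  | x :: xs =>
    if p x then [x] :: chunksBy p xs
    else match chunksBy p xs with
      | [] => [[x]]
      | c :: cs => (x :: c) :: cs

lemma chunksBy_nil (p : β → Bool) : chunksBy p [] = [] := rfl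

lemma chunksBy_flatten (p : β → Bool) (l : List β) : (chunksBy p l).flatten = l := by
  induction l with
  | nil => rfl
  | cons x xs ih =>
    by_cases h : p x
    · simp [chunksBy, h, ih]
    · simp only [chunksBy, h]
      rcases hcs : chunksBy p xs with _ | ⟨c, cs⟩
      · simp only [hcs, List.flatten] at ih ⊢
        simp [← ih]
      · rw [hcs] at ih
        simpa using ih

lemma chunksBy_ne_nil (p : β → Bool) (l : List β) : ∀ c ∈ chunksBy p l, c ≠ [] := by
  induction l with
  | nil => simp [chunksBy]
  | cons x xs ih =>
    by_cases h : p x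
    · simp only [chunksBy, h, if_pos]
      intro c hc
      rcases List.mem_cons.mp hc with rfl | hc
      · simp
      · exact ih c hc
    · simp only [chunksBy, h, if_neg]
      rcases hcs : chunksBy p xs with _ | ⟨c0, cs⟩
      · intro c hc
        rcases List.mem_cons.mp hc with rfl | hc
        · simp
        · simp at hc
      · intro c hc
        rcases List.mem_cons.mp hc with rfl | hc
        · simp
        · exact ih c (by rw [hcs]; exact List.mem_cons_of_mem _ hc)

lemma chunksBy_nonempty (p : β → Bool) (l : List β) (hl : l ≠ []) : chunksBy p l ≠ [] := by
  intro h
  have := chunksBy_flatten p l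
  rw [h] at this
  simp only [List.flatten_nil] at this
  exact hl this.symm

lemma chunksBy_struct (p : β → Bool) (l : List β) (hl : l ≠ [])
    (hlast : p (l.getLast hl) = true) :
    ∀ c ∈ chunksBy p l, ∃ body last, c = body ++ [last] ∧ p last = true ∧
      ∀ b ∈ body, p b = false := by
  induction l with
  | nil => simp at hl
  | cons x xs ih =>
    by_cases h : p x
    · simp only [chunksBy, h, if_pos]
      intro c hc
      rcases List.mem_cons.mp hc with rfl | hc
      · exact ⟨[], x, by simp, h, by simp⟩
      · have hxs : xs ≠ [] := by
          rintro rfl; simp [chunksBy] at hc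
        exact ih hxs (by rwa [List.getLast_cons hxs] at hlast) c hc
    · simp only [chunksBy, h, if_neg]
      have hxs : xs ≠ [] := by
        rintro rfl
        rw [List.getLast_singleton] at hlast
        simp [hlast] at h
      have hlast' : p (xs.getLast hxs) = true := by
        rwa [List.getLast_cons hxs] at hlast
      rcases hcs : chunksBy p xs with _ | ⟨c0, cs⟩
      · exact absurd hcs (chunksBy_nonempty p xs hxs)
      · intro c hc
        rcases List.mem_cons.mp hc with rfl | hc
        · obtain ⟨body, last, hd, hp, hb⟩ := ih hxs hlast' c0 (by rw [hcs]; simp)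
          refine ⟨x :: body, last, by simp [hd], hp, ?_⟩
          intro b hb'
          rcases List.mem_cons.mp hb' with rfl | hb'
          · simpa using h
          · exact hb b hb'
        · exact ih hxs hlast' c (by rw [hcs]; exact List.mem_cons_of_mem _ hc)

lemma flatten_ends (p : β → Bool) :
    ∀ (cs : List (List β)), (∀ c ∈ cs, ∃ b l, c = b ++ [l] ∧ p l = true) → cs ≠ [] →
      ∃ b x, cs.flatten = b ++ [x] ∧ p x = true := by
  intro cs
  induction cs with
  | nil => simp
  | cons c cs ih =>
    intro hall _
    rcases List.eq_nil_or_concat cs with rfl | ⟨_, _, hcs⟩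
    · obtain ⟨b, l, rfl, hl⟩ := hall c (by simp)
      exact ⟨b, l, by simp, hl⟩
    · have hcsne : cs ≠ [] := by rw [hcs]; simp
      obtain ⟨b, x, hbx, hx⟩ := ih (fun c' hc' => hall c' (List.mem_cons_of_mem _ hc')) hcsne
      refine ⟨c ++ b, x, ?_, hx⟩
      simp [hbx]

lemma mem_split_of_mem_chunks (p : β → Bool) (l : List β) {c : List β}
    (hc : c ∈ chunksBy p l) : ∃ pre post, l = pre ++ c ++ post ∧
      (∃ cs1 cs2, chunksBy p l = cs1 ++ c :: cs2 ∧ pre = cs1.flatten ∧ post = cs2.flatten) := by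
  obtain ⟨cs1, cs2, hsplit⟩ := List.append_of_mem hc
  refine ⟨cs1.flatten, cs2.flatten, ?_, cs1, cs2, hsplit, rfl, rfl⟩
  conv_lhs => rw [← chunksBy_flatten p l, hsplit]
  simp

lemma find?_pairwise {R : β → β → Prop} {l : List β} (hp : l.Pairwise R) {p : β → Bool} {a : β}
    (hf : l.find? p = some a) : ∀ b ∈ l, p b = true → a = b ∨ R a b := by
  induction l with
  | nil => simp at hf
  | cons x xs ih =>
    rcases hx : p x with _ | _
    · rw [List.find?_cons_of_neg (by simp [hx])] at hf
      intro b hb hpb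
      rcases List.mem_cons.mp hb with rfl | hb
      · rw [hpb] at hx; simp at hx
      · exact ih (List.Pairwise.sublist (List.sublist_cons_self x xs) hp) hf b hb hpb
    · rw [List.find?_cons_of_pos hx] at hf
      obtain rfl : x = a := by simpa using hf
      intro b hb hpb
      rcases List.mem_cons.mp hb with rfl | hb
      · exact Or.inl rfl
      · exact Or.inr ((List.pairwise_cons.mp hp).1 b hb)

end Chunks
end SimonFF

namespace SimonFF
open DTree

section ULem
variable {A S Δ : Type} [Monoid S] [DecidableEq Δ]

def wordsOf {A Δ : Type} (ls : List (DTree A × Δ)) : List A :=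
  (ls.map (fun q => q.1.word)).flatten

@[simp] lemma wordsOf_nil : wordsOf ([] : List (DTree A × Δ)) = [] := rfl

lemma wordsOf_append (l₁ l₂ : List (DTree A × Δ)) :
    wordsOf (l₁ ++ l₂) = wordsOf l₁ ++ wordsOf l₂ := by
  simp [wordsOf]

@[simp] lemma wordsOf_cons (q : DTree A × Δ) (l : List (DTree A × Δ)) :
    wordsOf (q :: l) = q.1.word ++ wordsOf l := by
  simp [wordsOf]

@[simp] lemma wordsOf_singleton (q : DTree A × Δ) : wordsOf [q] = q.1.word := by
  simp [wordsOf]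

lemma wordsOf_flatten (css : List (List (DTree A × Δ))) :
    wordsOf css.flatten = (css.map wordsOf).flatten := by
  induction css with
  | nil => rfl
  | cons c cs ih => simp [wordsOf_append, ih]

variable (α : List A → S) (ε : Δ → S)

/-- Build an n-ary node out of a list of chunks each of which we can realize as a tree. -/
lemma nodeOfChunks (B : ℕ) :
    ∀ (cs : List (List (DTree A × Δ))),
      (∀ c ∈ cs, ∃ t : DTree A, t.word = wordsOf c ∧ DTree.IsFF α t ∧ t.height ≤ B) →
      ∃ ts : List (DTree A), (ts.map DTree.word).flatten = wordsOf cs.flatten ∧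
        (∀ t ∈ ts, DTree.IsFF α t) ∧ (∀ t ∈ ts, t.height ≤ B) ∧
        (∀ t ∈ ts, ∃ c ∈ cs, t.word = wordsOf c) ∧ ts.length = cs.length := by
  intro cs
  induction cs with
  | nil => exact fun _ => ⟨[], by simp, by simp, by simp, by simp, rfl⟩
  | cons c cs ih =>
    intro hex
    obtain ⟨t, htw, htf, hth⟩ := hex c (by simp)
    obtain ⟨ts, h1, h2, h3, h4, h5⟩ := ih (fun c' hc' => hex c' (List.mem_cons_of_mem _ hc'))
    refine ⟨t :: ts, ?_, ?_, ?_, ?_, by simp [h5]⟩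
    · simp only [List.map_cons, List.flatten_cons, List.flatten_cons, wordsOf_append, htw, h1]
    · intro t' ht'
      rcases List.mem_cons.mp ht' with rfl | ht'
      · exact htf
      · exact h2 t' ht'
    · intro t' ht'
      rcases List.mem_cons.mp ht' with rfl | ht'
      · exact hth
      · exact h3 t' ht'
    · intro t' ht'
      rcases List.mem_cons.mp ht' with rfl | ht'
      · exact ⟨c, by simp, htw⟩
      · obtain ⟨c', hc', hw⟩ := h4 t' ht'
        exact ⟨c', List.mem_cons_of_mem _ hc', hw⟩

/-- The (H2) hypothesis: any segment of the letter list lying between two positions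
carrying equal data has α-value `ε` of that data. -/
def H2 (ls : List (DTree A × Δ)) : Prop :=
  ∀ (l₁ : List (DTree A × Δ)) (x : DTree A × Δ) (l₂ : List (DTree A × Δ))
    (y : DTree A × Δ) (l₃ : List (DTree A × Δ)),
    ls = l₁ ++ x :: (l₂ ++ y :: l₃) → x.2 = y.2 → α (wordsOf (l₂ ++ [y])) = ε x.2

lemma H2_infix {ls pre post mid : List (DTree A × Δ)} (h : H2 α ε ls)
    (hsplit : ls = pre ++ mid ++ post) : H2 α ε mid := by
  intro l₁ x l₂ y l₃ hmid hxy
  exact h (pre ++ l₁) x l₂ y (l₃ ++ post) (by rw [hsplit, hmid]; simp [List.append_assoc]) hxy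

/-- value of a chunk that ends with a `δ*`-cut and is preceded by a `δ*`-cut -/
lemma chunk_value {ls : List (DTree A × Δ)} (h2 : H2 α ε ls) {δs : Δ}
    {pre c post : List (DTree A × Δ)} (hsplit : ls = pre ++ c ++ post)
    {pb : List (DTree A × Δ)} {x : DTree A × Δ} (hpre : pre = pb ++ [x]) (hx : x.2 = δs)
    {cb : List (DTree A × Δ)} {y : DTree A × Δ} (hc : c = cb ++ [y]) (hy : y.2 = δs) :
    α (wordsOf c) = ε δs := by
  have := h2 pb x cb y post
    (by rw [hsplit, hpre, hc]; simp [List.append_assoc]) (by rw [hx, hy])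
  rw [hc]
  rw [this, hx]

theorem lemU (hmul : ∀ u v : List A, α (u ++ v) = α u * α v) :
    ∀ (k : ℕ) (h₀ : ℕ) (ls : List (DTree A × Δ)),
    (∀ q ∈ ls, DTree.IsFF α q.1) →
    (∀ q ∈ ls, q.1.height ≤ h₀) →
    H2 α ε ls →
    ((ls.map Prod.snd).toFinset.card ≤ k) →
    ∃ t : DTree A, t.word = wordsOf ls ∧ DTree.IsFF α t ∧ t.height ≤ h₀ + (3 * k - 1) := by
  intro k
  induction k with
  | zero =>
    intro h₀ ls hff hht hh2 hcard
    have hempty : ls = [] := by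
      rcases ls with _ | ⟨q, ls'⟩
      · rfl
      · exfalso
        have : q.2 ∈ (((q :: ls').map Prod.snd).toFinset) := by simp
        have := Finset.card_pos.mpr ⟨q.2, this⟩
        omega
    subst hempty
    exact ⟨DTree.leaf none, rfl, isFF_leaf α none, by simp [height_leaf]⟩
  | succ k ih =>
    intro h₀ ls hff hht hh2 hcard
    rcases hlse : ls with _ | ⟨q0, ls'⟩
    · exact ⟨DTree.leaf none, rfl, isFF_leaf α none, by simp [height_leaf]⟩
    rw [← hlse]
    have hlsne : ls ≠ [] := by rw [hlse]; simp
    set δs := (ls.getLast hlsne).2 with hδs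
    set p : (DTree A × Δ) → Bool := fun q => decide (q.2 = δs) with hp
    have hplast : p (ls.getLast hlsne) = true := by simp [hp, hδs]
    set cs := chunksBy p ls with hcs
    have hflat : cs.flatten = ls := chunksBy_flatten p ls
    have hstruct := chunksBy_struct p ls hlsne hplast
    rw [← hcs] at hstruct
    have hδsmem : δs ∈ (ls.map Prod.snd).toFinset := by
      simp only [List.mem_toFinset, List.mem_map]
      exact ⟨ls.getLast hlsne, List.getLast_mem hlsne, rfl⟩
    -- per-chunk trees
    have hchunk : ∀ c ∈ cs, ∃ t : DTree A, t.word = wordsOf c ∧ DTree.IsFF α t ∧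
        t.height ≤ h₀ + 3 * k := by
      intro c hc
      obtain ⟨body, last, hdec, hplastc, hbody⟩ := hstruct c hc
      obtain ⟨pre, post, hsplit, -⟩ := mem_split_of_mem_chunks p ls hc
      have hmemls : ∀ b ∈ c, b ∈ ls := by
        intro b hb; rw [hsplit]; simp only [List.mem_append]
        exact Or.inl (Or.inr hb)
      by_cases hbe : body = []
      · -- single-letter chunk
        subst hbe
        simp only [List.nil_append] at hdec
        subst hdec
        refine ⟨last.1, by simp, hff last (hmemls last (by simp)), ?_⟩
        have := hht last (hmemls last (by simp))
        omega
      · obtain ⟨b0, hb0⟩ := List.exists_mem_of_ne_nil body hbe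
        have hb0ne : b0.2 ≠ δs := by
          have := hbody b0 hb0
          simpa [hp] using this
        have hkpos : 1 ≤ k := by
          by_contra hk
          have hk0 : k = 0 := by omega
          -- card ≤ 1 but two distinct data
          have hmem1 : b0.2 ∈ (ls.map Prod.snd).toFinset := by
            simp only [List.mem_toFinset, List.mem_map]
            exact ⟨b0, hmemls b0 (by rw [hdec]; simp [hb0]), rfl⟩
          have h2le : 2 ≤ (ls.map Prod.snd).toFinset.card := by
            have : ({b0.2, δs} : Finset Δ) ⊆ (ls.map Prod.snd).toFinset := by
              intro z hz
              simp only [Finset.mem_insert, Finset.mem_singleton] at hz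
              rcases hz with rfl | rfl
              · exact hmem1
              · exact hδsmem
            have := Finset.card_le_card this
            rwa [Finset.card_insert_of_notMem (by simp [hb0ne]), Finset.card_singleton] at this
          omega
        -- recursive tree for the body
        have hbodysub : ∀ b ∈ body, b ∈ ls := by
          intro b hb; exact hmemls b (by rw [hdec]; simp [hb])
        have hbcard : ((body.map Prod.snd).toFinset).card ≤ k := by
          have hsub : (body.map Prod.snd).toFinset ⊆ (ls.map Prod.snd).toFinset.erase δs := by
            intro z hz
            simp only [List.mem_toFinset, List.mem_map] at hz
            obtain ⟨b, hb, rfl⟩ := hz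
            refine Finset.mem_erase.mpr ⟨by simpa [hp] using hbody b hb, ?_⟩
            simp only [List.mem_toFinset, List.mem_map]
            exact ⟨b, hbodysub b hb, rfl⟩
          have := Finset.card_le_card hsub
          rw [Finset.card_erase_of_mem hδsmem] at this
          omega
        obtain ⟨tb, htbw, htbf, htbh⟩ := ih h₀ body
          (fun q hq => hff q (hbodysub q hq)) (fun q hq => hht q (hbodysub q hq))
          (H2_infix (pre := pre) (mid := body) (post := last :: post) α ε hh2
            (by rw [hsplit, hdec]; simp [List.append_assoc])) hbcard
        refine ⟨DTree.node [tb, last.1], ?_, ?_, ?_⟩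
        · rw [word_node2, htbw, hdec, wordsOf_append, wordsOf_singleton]
        · exact isFF_node2 α htbf (hff last (hmemls last (by rw [hdec]; simp)))
        · have h1 := hht last (hmemls last (by rw [hdec]; simp))
          have h2 : tb.height ≤ h₀ + (3 * k - 1) := htbh
          have := height_node2_le (t₁ := tb) (t₂ := last.1) (H := h₀ + (3*k - 1))
            (by omega) (by omega)
          omega
    -- assemble
    rcases hcse : cs with _ | ⟨c1, cs'⟩
    · exfalso; exact chunksBy_nonempty p ls hlsne (by rw [← hcs, hcse])
    rcases hcs'e : cs' with _ | ⟨c2, cs''⟩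
    · -- single chunk
      obtain ⟨t, htw, htf, hth⟩ := hchunk c1 (by rw [hcse]; simp)
      refine ⟨t, ?_, htf, by omega⟩
      rw [htw, ← hflat, hcse, hcs'e]
      simp
    · -- more chunks : head + idempotent node
      obtain ⟨t1, ht1w, ht1f, ht1h⟩ := hchunk c1 (by rw [hcse]; simp)
      have hmidval : ∀ c ∈ cs', α (wordsOf c) = ε δs := by
        intro c hc
        have hcmem : c ∈ cs := by rw [hcse]; exact List.mem_cons_of_mem _ hc
        obtain ⟨r1, r2, hr⟩ := List.append_of_mem hc
        have hsplit : ls = (c1 ++ r1.flatten) ++ c ++ r2.flatten := by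
          rw [← hflat, hcse, hr]; simp [List.append_assoc]
        obtain ⟨cb, y, hcdec, hpy, -⟩ := hstruct c hcmem
        -- pre ends with a δs element
        have hprewit : ∃ (pb : List (DTree A × Δ)) (x : DTree A × Δ), c1 ++ r1.flatten = pb ++ [x] ∧ x.2 = δs := by
          rcases hr1 : r1 with _ | ⟨rc, rcs⟩
          · obtain ⟨cb1, y1, hc1dec, hpy1, -⟩ := hstruct c1 (by rw [hcse]; simp)
            exact ⟨cb1, y1, by simp [hc1dec], by simpa [hp] using hpy1⟩
          · rw [← hr1]
            have : ∀ c' ∈ r1, ∃ b l, c' = b ++ [l] ∧ p l = true := by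
              intro c' hc'
              obtain ⟨b, l, hd, hl, -⟩ := hstruct c'
                (by rw [hcse, hr]; simp only [List.mem_cons, List.mem_append]; tauto)
              exact ⟨b, l, hd, hl⟩
            obtain ⟨b, x, hbx, hx⟩ := flatten_ends p r1 this (by rw [hr1]; simp)
            exact ⟨c1 ++ b, x, by simp [hbx], by simpa [hp] using hx⟩
        obtain ⟨pb, x, hpre, hx⟩ := hprewit
        exact chunk_value α ε hh2 hsplit hpre hx hcdec (by simpa [hp] using hpy)
      obtain ⟨ts, htsw, htsf, htsh, htsv, htsl⟩ := nodeOfChunks α (h₀ + 3 * k) cs'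
        (fun c hc => hchunk c (by rw [hcse]; exact List.mem_cons_of_mem _ hc))
      have hidem : 2 < ts.length → ε δs * ε δs = ε δs := by
        intro hlen
        rw [htsl, hcs'e] at hlen
        -- cs'' has ≥ 2 elements ⇒ at least c2 c3
        rcases hcs''e : cs'' with _ | ⟨c3, cs'''⟩
        · rw [hcs''e] at hlen; simp at hlen
        -- value of c2 ++ c3
        have hc2 : α (wordsOf c2) = ε δs := hmidval c2 (by rw [hcs'e]; simp)
        have hc3 : α (wordsOf c3) = ε δs := hmidval c3 (by rw [hcs'e, hcs''e]; simp)
        have hc23 : α (wordsOf (c2 ++ c3)) = ε δs := by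
          have hsplit : ls = c1 ++ (c2 ++ c3) ++ cs'''.flatten := by
            rw [← hflat, hcse, hcs'e, hcs''e]; simp [List.append_assoc]
          obtain ⟨cb1, y1, hc1dec, hpy1, -⟩ := hstruct c1 (by rw [hcse]; simp)
          obtain ⟨cb3, y3, hc3dec, hpy3, -⟩ := hstruct c3
            (by rw [hcse, hcs'e, hcs''e]; simp)
          exact chunk_value (cb := c2 ++ cb3) (y := y3) α ε hh2 hsplit hc1dec
            (by simpa [hp] using hpy1)
            (by rw [hc3dec]; simp [List.append_assoc]) (by simpa [hp] using hpy3)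
        rw [wordsOf_append, hmul, hc2, hc3] at hc23
        exact hc23
      refine ⟨DTree.node [t1, DTree.node ts], ?_, ?_, ?_⟩
      · rw [word_node2, word_node, ht1w, htsw, ← wordsOf_append, ← hflat, hcse]
        simp
      · refine isFF_node2 α ht1f ?_
        rw [isFF_node_iff]
        refine ⟨?_, htsf⟩
        intro hlen
        refine ⟨ε δs, hidem hlen, ?_⟩
        intro t ht
        obtain ⟨c, hc, hw⟩ := htsv t ht
        rw [hw]; exact hmidval c hc
      · have hinner : (DTree.node ts).height ≤ h₀ + 3*k + 1 := height_node_le htsh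
        have := height_node2_le (t₁ := t1) (t₂ := DTree.node ts) (H := h₀ + 3*k+1)
          (by omega) (by omega)
        omega

end ULem
end SimonFF

namespace SimonFF
open DTree

section UGLem
variable {A S Δ : Type} [Monoid S] [DecidableEq Δ]

lemma mem_dropLast_of_split {β : Type} {l pre body post : List β} {x : β}
    (h : l = pre ++ (body ++ [x]) ++ post) : ∀ b ∈ pre ++ body, b ∈ l.dropLast := by
  intro b hb
  rcases List.eq_nil_or_concat post with rfl | ⟨p', z, rfl⟩
  · have : l.dropLast = pre ++ body := by
      rw [h]
      simp only [List.append_nil, ← List.append_assoc]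
      exact List.dropLast_concat ..
    rw [this]; exact hb
  · have hpost : (p'.concat z) ≠ [] := by simp
    have : l.dropLast = (pre ++ (body ++ [x])) ++ (p'.concat z).dropLast := by
      rw [h]
      exact List.dropLast_append_of_ne_nil hpost
    rw [this]
    simp only [List.mem_append] at hb ⊢
    rcases hb with hb | hb
    · exact Or.inl (Or.inl hb)
    · exact Or.inl (Or.inr (by simp [hb]))

variable (α : List A → S) (ε : Δ → S)

theorem lemUG (hmul : ∀ u v : List A, α (u ++ v) = α u * α v)
    (k : ℕ) (h₀ : ℕ) (ls : List (DTree A × Δ))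
    (hff : ∀ q ∈ ls, DTree.IsFF α q.1)
    (hht : ∀ q ∈ ls.dropLast, q.1.height ≤ h₀)
    (hhtall : ∀ q ∈ ls, q.1.height ≤ h₀ + 1)
    (hh2 : H2 α ε ls)
    (hcard : (ls.map Prod.snd).toFinset.card ≤ k) :
    ∃ t : DTree A, t.word = wordsOf ls ∧ DTree.IsFF α t ∧
      t.height ≤ h₀ + max 3 (3 * k - 1) := by
  rcases hlse : ls with _ | ⟨q0, ls0⟩
  · exact ⟨DTree.leaf none, rfl, isFF_leaf α none, by simp [height_leaf]⟩
  rw [← hlse]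
  have hlsne : ls ≠ [] := by rw [hlse]; simp
  set δs := (ls.getLast hlsne).2 with hδs
  set p : (DTree A × Δ) → Bool := fun q => decide (q.2 = δs) with hp
  have hplast : p (ls.getLast hlsne) = true := by simp [hp, hδs]
  set cs := chunksBy p ls with hcs
  have hflat : cs.flatten = ls := chunksBy_flatten p ls
  have hstruct := chunksBy_struct p ls hlsne hplast
  rw [← hcs] at hstruct
  have hδsmem : δs ∈ (ls.map Prod.snd).toFinset := by
    simp only [List.mem_toFinset, List.mem_map]
    exact ⟨ls.getLast hlsne, List.getLast_mem hlsne, rfl⟩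
  have hkpos : 1 ≤ k := by
    have := Finset.card_pos.mpr ⟨δs, hδsmem⟩
    omega
  -- per-chunk trees
  have hchunk : ∀ c ∈ cs, ∃ t : DTree A, t.word = wordsOf c ∧ DTree.IsFF α t ∧
      t.height ≤ h₀ + max (3 * k - 3) 1 := by
    intro c hc
    obtain ⟨body, last, hdec, hplastc, hbody⟩ := hstruct c hc
    obtain ⟨pre, post, hsplit, -⟩ := mem_split_of_mem_chunks p ls hc
    have hmemls : ∀ b ∈ c, b ∈ ls := by
      intro b hb; rw [hsplit]; simp only [List.mem_append]
      exact Or.inl (Or.inr hb)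
    have hsplit' : ls = pre ++ (body ++ [last]) ++ post := by rw [hsplit, hdec]
    by_cases hbe : body = []
    · subst hbe
      simp only [List.nil_append] at hdec
      subst hdec
      refine ⟨last.1, by simp, hff last (hmemls last (by simp)), ?_⟩
      have := hhtall last (hmemls last (by simp))
      omega
    · obtain ⟨b0, hb0⟩ := List.exists_mem_of_ne_nil body hbe
      have hb0ne : b0.2 ≠ δs := by
        have := hbody b0 hb0
        simpa [hp] using this
      have hbodysub : ∀ b ∈ body, b ∈ ls := by
        intro b hb; exact hmemls b (by rw [hdec]; simp [hb])
      have hk2 : 2 ≤ k := by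
        by_contra hk
        have hmem1 : b0.2 ∈ (ls.map Prod.snd).toFinset := by
          simp only [List.mem_toFinset, List.mem_map]
          exact ⟨b0, hbodysub b0 hb0, rfl⟩
        have h2le : 2 ≤ (ls.map Prod.snd).toFinset.card := by
          have hsub2 : ({b0.2, δs} : Finset Δ) ⊆ (ls.map Prod.snd).toFinset := by
            intro z hz
            simp only [Finset.mem_insert, Finset.mem_singleton] at hz
            rcases hz with rfl | rfl
            · exact hmem1
            · exact hδsmem
          have := Finset.card_le_card hsub2
          rwa [Finset.card_insert_of_notMem (by simp [hb0ne]), Finset.card_singleton] at this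
        omega
      have hbcard : ((body.map Prod.snd).toFinset).card ≤ k - 1 := by
        have hsub : (body.map Prod.snd).toFinset ⊆ (ls.map Prod.snd).toFinset.erase δs := by
          intro z hz
          simp only [List.mem_toFinset, List.mem_map] at hz
          obtain ⟨b, hb, rfl⟩ := hz
          refine Finset.mem_erase.mpr ⟨by simpa [hp] using hbody b hb, ?_⟩
          simp only [List.mem_toFinset, List.mem_map]
          exact ⟨b, hbodysub b hb, rfl⟩
        have := Finset.card_le_card hsub
        rw [Finset.card_erase_of_mem hδsmem] at this
        omega
      have hbodyht : ∀ q ∈ body, q.1.height ≤ h₀ := by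
        intro q hq
        exact hht q (mem_dropLast_of_split hsplit' q (by simp [hq]))
      obtain ⟨tb, htbw, htbf, htbh⟩ := lemU α ε hmul (k - 1) h₀ body
        (fun q hq => hff q (hbodysub q hq)) hbodyht
        (H2_infix (pre := pre) (mid := body) (post := last :: post) α ε hh2
          (by rw [hsplit, hdec]; simp [List.append_assoc])) hbcard
      refine ⟨DTree.node [tb, last.1], ?_, ?_, ?_⟩
      · rw [word_node2, htbw, hdec, wordsOf_append, wordsOf_singleton]
      · exact isFF_node2 α htbf (hff last (hmemls last (by rw [hdec]; simp)))
      · have h1 := hhtall last (hmemls last (by rw [hdec]; simp))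
        have h2 : tb.height ≤ h₀ + (3 * (k-1) - 1) := htbh
        have h3 := height_node2_le (t₁ := tb) (t₂ := last.1)
          (H := h₀ + max (3 * k - 3) 1 - 1) (by omega) (by omega)
        omega
  -- assemble
  rcases hcse : cs with _ | ⟨c1, cs'⟩
  · exfalso; exact chunksBy_nonempty p ls hlsne (by rw [← hcs, hcse])
  rcases hcs'e : cs' with _ | ⟨c2, cs''⟩
  · obtain ⟨t, htw, htf, hth⟩ := hchunk c1 (by rw [hcse]; simp)
    refine ⟨t, ?_, htf, by omega⟩
    rw [htw, ← hflat, hcse, hcs'e]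
    simp
  · obtain ⟨t1, ht1w, ht1f, ht1h⟩ := hchunk c1 (by rw [hcse]; simp)
    have hmidval : ∀ c ∈ cs', α (wordsOf c) = ε δs := by
      intro c hc
      have hcmem : c ∈ cs := by rw [hcse]; exact List.mem_cons_of_mem _ hc
      obtain ⟨r1, r2, hr⟩ := List.append_of_mem hc
      have hsplit : ls = (c1 ++ r1.flatten) ++ c ++ r2.flatten := by
        rw [← hflat, hcse, hr]; simp [List.append_assoc]
      obtain ⟨cb, y, hcdec, hpy, -⟩ := hstruct c hcmem
      have hprewit : ∃ (pb : List (DTree A × Δ)) (x : DTree A × Δ),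
          c1 ++ r1.flatten = pb ++ [x] ∧ x.2 = δs := by
        rcases hr1 : r1 with _ | ⟨rc, rcs⟩
        · obtain ⟨cb1, y1, hc1dec, hpy1, -⟩ := hstruct c1 (by rw [hcse]; simp)
          exact ⟨cb1, y1, by simp [hc1dec], by simpa [hp] using hpy1⟩
        · rw [← hr1]
          have hr1all : ∀ c' ∈ r1, ∃ b l, c' = b ++ [l] ∧ p l = true := by
            intro c' hc'
            obtain ⟨b, l, hd, hl, -⟩ := hstruct c'
              (by rw [hcse, hr]; simp only [List.mem_cons, List.mem_append]; tauto)
            exact ⟨b, l, hd, hl⟩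
          obtain ⟨b, x, hbx, hx⟩ := flatten_ends p r1 hr1all (by rw [hr1]; simp)
          exact ⟨c1 ++ b, x, by simp [hbx], by simpa [hp] using hx⟩
      obtain ⟨pb, x, hpre, hx⟩ := hprewit
      exact chunk_value α ε hh2 hsplit hpre hx hcdec (by simpa [hp] using hpy)
    obtain ⟨ts, htsw, htsf, htsh, htsv, htsl⟩ := nodeOfChunks α (h₀ + max (3 * k - 3) 1) cs'
      (fun c hc => hchunk c (by rw [hcse]; exact List.mem_cons_of_mem _ hc))
    have hidem : 2 < ts.length → ε δs * ε δs = ε δs := by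
      intro hlen
      rw [htsl, hcs'e] at hlen
      rcases hcs''e : cs'' with _ | ⟨c3, cs'''⟩
      · rw [hcs''e] at hlen; simp at hlen
      have hc2 : α (wordsOf c2) = ε δs := hmidval c2 (by rw [hcs'e]; simp)
      have hc3 : α (wordsOf c3) = ε δs := hmidval c3 (by rw [hcs'e, hcs''e]; simp)
      have hc23 : α (wordsOf (c2 ++ c3)) = ε δs := by
        have hsplit : ls = c1 ++ (c2 ++ c3) ++ cs'''.flatten := by
          rw [← hflat, hcse, hcs'e, hcs''e]; simp [List.append_assoc]
        obtain ⟨cb1, y1, hc1dec, hpy1, -⟩ := hstruct c1 (by rw [hcse]; simp)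
        obtain ⟨cb3, y3, hc3dec, hpy3, -⟩ := hstruct c3
          (by rw [hcse, hcs'e, hcs''e]; simp)
        exact chunk_value (cb := c2 ++ cb3) (y := y3) α ε hh2 hsplit hc1dec
          (by simpa [hp] using hpy1)
          (by rw [hc3dec]; simp [List.append_assoc]) (by simpa [hp] using hpy3)
      rw [wordsOf_append, hmul, hc2, hc3] at hc23
      exact hc23
    refine ⟨DTree.node [t1, DTree.node ts], ?_, ?_, ?_⟩
    · rw [word_node2, word_node, ht1w, htsw, ← wordsOf_append, ← hflat, hcse]
      simp
    · refine isFF_node2 α ht1f ?_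
      rw [isFF_node_iff]
      refine ⟨?_, htsf⟩
      intro hlen
      refine ⟨ε δs, hidem hlen, ?_⟩
      intro t ht
      obtain ⟨c, hc, hw⟩ := htsv t ht
      rw [hw]; exact hmidval c hc
    · have hinner : (DTree.node ts).height ≤ h₀ + max (3 * k - 3) 1 + 1 :=
        height_node_le htsh
      have := height_node2_le (t₁ := t1) (t₂ := DTree.node ts)
        (H := h₀ + max (3 * k - 3) 1 + 1) (by omega) (by omega)
      omega

end UGLem
end SimonFF

namespace SimonFF
open DTree

section Chain

attribute [local instance] Classical.propDecidable

variable {S A : Type} [Monoid S] [Fintype S]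
variable (α : List A → S) (w : List A)

/-- list utility lemmas -/
lemma prefix_drop_append {q q' : List A} (h : q <+: q') : q ++ q'.drop q.length = q' := by
  obtain ⟨t, rfl⟩ := h; rw [List.drop_left]

lemma seg_trans {q₁ q₂ q₃ : List A} (h12 : q₁ <+: q₂) (h23 : q₂ <+: q₃) :
    q₂.drop q₁.length ++ q₃.drop q₂.length = q₃.drop q₁.length := by
  obtain ⟨t, rfl⟩ := h12
  obtain ⟨u, rfl⟩ := h23
  rw [List.drop_left, List.drop_left, List.append_assoc, List.drop_left]

lemma seg_split (hmul : ∀ u v : List A, α (u ++ v) = α u * α v) {q q' : List A} (h : q <+: q') :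
    α q' = α q * α (q'.drop q.length) := by
  conv_lhs => rw [← prefix_drop_append h]
  rw [hmul]

/-- `Jp t` : t is J-equivalent to the value of `w`. -/
def Jp (t : S) : Prop := eqJ t (α w)

lemma sandwich {x t : S} (h1 : leJ x t) (h2 : Jp α w t) (h3 : leJ (α w) x) :
    Jp α w x := ⟨leJ_trans h1 h2.1, h3⟩

/-- good cut position -/
def CutP (q : List A) : Prop :=
  q <+: w ∧ Jp α w (α q) ∧ Jp α w (α (w.drop q.length))

def validZ (q z : List A) : Prop :=
  z ≠ [] ∧ CutP α w (q ++ z) ∧ Jp α w (α z)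

inductive GChain : List A → List (List A) → Prop
  | nil (q : List A) (h : ∀ z, ¬ validZ α w q z) : GChain q []
  | cons (q z : List A) (bs : List (List A)) (h : validZ α w q z)
      (hmin : ∀ z', z' <+: z → z' ≠ z → ¬ validZ α w q z')
      (htail : GChain (q ++ z) bs) : GChain q (z :: bs)

def cutsList : List A → List (List A) → List (List A)
  | q, [] => [q]
  | q, z :: bs => q :: cutsList (q ++ z) bs

lemma cutsList_ne_nil (q : List A) (bs : List (List A)) : cutsList q bs ≠ [] := by
  cases bs <;> simp [cutsList]

lemma head_mem_cutsList (q : List A) (bs : List (List A)) : q ∈ cutsList q bs := by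
  cases bs <;> simp [cutsList]

lemma gchain_exists : ∀ (fuel : ℕ) (q : List A), w.length - q.length ≤ fuel →
    ∃ bs, GChain α w q bs := by
  intro fuel
  induction fuel with
  | zero =>
    intro q hq
    refine ⟨[], GChain.nil q ?_⟩
    rintro z ⟨hzne, ⟨hpre, -, -⟩, -⟩
    have := hpre.length_le
    simp only [List.length_append] at this
    have : z.length = 0 := by omega
    exact hzne (List.length_eq_zero_iff.mp this)
  | succ fuel ih =>
    intro q hq
    by_cases hex : ∃ z, validZ α w q z
    · -- take a length-minimal valid z ; every valid z is a prefix of w.drop q.length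
      have hexl : ∃ ℓ : ℕ, validZ α w q ((w.drop q.length).take ℓ) := by
        obtain ⟨z, hz⟩ := hex
        obtain ⟨hzne, ⟨hpre, h2, h3⟩, h4⟩ := hz
        refine ⟨z.length, ?_⟩
        have hzpre : z = (w.drop q.length).take z.length := by
          obtain ⟨t, ht⟩ := hpre
          have : w.drop q.length = z ++ t := by
            rw [← ht, List.append_assoc, List.drop_left]
          rw [this, List.take_left]
        rw [← hzpre]
        exact ⟨hzne, ⟨hpre, h2, h3⟩, h4⟩
      set ℓ₀ := Nat.find hexl with hℓ₀
      have hvalid := Nat.find_spec hexl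
      set z := (w.drop q.length).take ℓ₀ with hz
      have hzne : z ≠ [] := hvalid.1
      have hlen : 0 < z.length := List.length_pos_iff.mpr hzne
      have hql : q.length + z.length ≤ w.length := by
        have := hvalid.2.1.1.length_le
        simpa using this
      obtain ⟨bs, hbs⟩ := ih (q ++ z) (by simp only [List.length_append]; omega)
      refine ⟨z :: bs, GChain.cons q z bs hvalid ?_ hbs⟩
      intro z' hpre' hne' hval'
      have hz'pre : z' <+: w.drop q.length := hpre'.trans (List.take_prefix _ _)
      have hz'form : z' = (w.drop q.length).take z'.length := List.prefix_iff_eq_take.mp hz'pre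
      have hle2 : ℓ₀ ≤ (w.drop q.length).length := by
        by_contra hcon
        push_neg at hcon
        have hmin := Nat.find_min hexl hcon
        apply hmin
        have heq : (w.drop q.length).take ((w.drop q.length).length)
            = (w.drop q.length).take ℓ₀ := by
          rw [List.take_length, List.take_of_length_le (by omega)]
        rw [heq]
        exact hvalid
      have hzlen : z.length = ℓ₀ := by
        rw [hz, List.length_take]; omega
      have hlt : z'.length < ℓ₀ := by
        have hle : z'.length ≤ z.length := hpre'.length_le
        rcases Nat.lt_or_ge z'.length ℓ₀ with h | h
        · exact h
        · exact absurd (hpre'.eq_of_length (by omega)) hne'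
      have hmin2 := Nat.find_min hexl hlt
      rw [← hz'form] at hmin2
      exact hmin2 hval'
    · push_neg at hex
      exact ⟨[], GChain.nil q hex⟩

end Chain
end SimonFF

namespace SimonFF
open DTree

section DataSec

attribute [local instance] Classical.propDecidable

variable {S A : Type} [Monoid S] [Fintype S]
variable (α : List A → S) (w : List A)

lemma pref_lt {q q' : List A} (h : q <+: q') (hne : q ≠ q') : q.length < q'.length := by
  rcases Nat.lt_or_ge q.length q'.length with h1 | h1
  · exact h1
  · exact absurd (h.eq_of_length (le_antisymm h.length_le h1)) hne

noncomputable def Rrep (q : List A) : S := if q = w then α w else α (w.drop q.length)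

noncomputable def deltaF (q : List A) : (S → Prop) × (S → Prop) :=
  (fun z => eqR z (Rrep α w q), fun z => eqL z (α q))

noncomputable def ancOf (CL : List (List A)) (q : List A) : List A :=
  ((CL.find? (fun q' => decide (deltaF α w q' = deltaF α w q))).getD q)

noncomputable def dfltOf (d : (S → Prop) × (S → Prop)) : S :=
  if h : ∃ e, e * e = e ∧ d.1 e ∧ d.2 e then h.choose
  else if h2 : ∃ z, d.1 z ∧ d.2 z then h2.choose else 1

noncomputable def epsOf (D : ((S → Prop) × (S → Prop)) × S) : S :=
  if h : ∃ e, e * e = e ∧ D.1.1 e ∧ D.1.2 e then h.choose else D.2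

noncomputable def gammaOf (CL : List (List A)) (q : List A) : S :=
  if ancOf α w CL q = q then dfltOf (deltaF α w q)
  else α (q.drop (ancOf α w CL q).length)

noncomputable def dataOf (CL : List (List A)) (q : List A) :
    ((S → Prop) × (S → Prop)) × S :=
  (deltaF α w q, gammaOf α w CL q)

lemma anc_spec (CL : List (List A)) (hpw : CL.Pairwise (fun a b => a <+: b ∧ a ≠ b))
    (q : List A) (hq : q ∈ CL) :
    ancOf α w CL q ∈ CL ∧ deltaF α w (ancOf α w CL q) = deltaF α w q ∧
      ancOf α w CL q <+: q := by
  have hprq : (fun q' => decide (deltaF α w q' = deltaF α w q)) q = true := by simp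
  rcases hfind : CL.find? (fun q' => decide (deltaF α w q' = deltaF α w q)) with _ | a
  · exact absurd hprq (by simpa using List.find?_eq_none.mp hfind q hq)
  · have hmem := List.mem_of_find?_eq_some hfind
    have hδ : deltaF α w a = deltaF α w q := by
      have := List.find?_some hfind
      simpa using this
    have hanc : ancOf α w CL q = a := by
      unfold ancOf; rw [hfind]; rfl
    rw [hanc]
    refine ⟨hmem, hδ, ?_⟩
    rcases find?_pairwise hpw hfind q hq hprq with heq | ⟨hp, -⟩
    · rw [heq]
    · exact hp

lemma anc_congr (CL : List (List A)) {q₁ q₂ : List A} (hq₁ : q₁ ∈ CL)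
    (hδ : deltaF α w q₁ = deltaF α w q₂) :
    ancOf α w CL q₁ = ancOf α w CL q₂ := by
  unfold ancOf
  have hpr : (fun q' => decide (deltaF α w q' = deltaF α w q₁)) =
      (fun q' => decide (deltaF α w q' = deltaF α w q₂)) := by
    funext q'; simp only [hδ]
  rw [hpr]
  rcases hfind : CL.find? (fun q' => decide (deltaF α w q' = deltaF α w q₂)) with _ | a
  · exfalso
    have := List.find?_eq_none.mp hfind q₁ hq₁
    simp only [decide_eq_true_eq] at this
    exact this hδ
  · rfl

section CoreFact

variable (CL : List (List A))

theorem core_fact (hmul : ∀ u v : List A, α (u ++ v) = α u * α v)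
    (hCL1 : ∀ q ∈ CL, Jp α w (α q))
    (hCL2 : ∀ q₁ q₂, q₁ ∈ CL → q₂ ∈ CL → q₁ <+: q₂ → q₁ ≠ q₂ →
      Jp α w (α (q₂.drop q₁.length)))
    (hCL3 : ∀ q ∈ CL, Jp α w (Rrep α w q))
    (hpw : CL.Pairwise (fun a b => a <+: b ∧ a ≠ b))
    (hww : ∀ q ∈ CL, q <+: w) :
    ∀ q₁ q₂, q₁ ∈ CL → q₂ ∈ CL → q₁ <+: q₂ → q₁ ≠ q₂ →
      dataOf α w CL q₁ = dataOf α w CL q₂ →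
      α (q₂.drop q₁.length) = epsOf (dataOf α w CL q₁) := by
  intro q₁ q₂ h₁ h₂ hpre hne hdata
  have hδ : deltaF α w q₁ = deltaF α w q₂ := congrArg Prod.fst hdata
  have hγ : gammaOf α w CL q₁ = gammaOf α w CL q₂ := congrArg Prod.snd hdata
  set v := α (q₂.drop q₁.length) with hv
  have hJv : Jp α w v := hCL2 q₁ q₂ h₁ h₂ hpre hne
  have hvL : eqL v (α q₂) := by
    have h1 : leL (α q₂) v := ⟨α q₁, seg_split α hmul hpre⟩
    have h2 : leJ v (α q₂) := leJ_trans hJv.1 (hCL1 q₂ h₂).2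
    exact ⟨stabL h1 h2, h1⟩
  have hvR : eqR v (Rrep α w q₁) := by
    have hq₁w : q₁ ≠ w := by
      intro hq
      have := pref_lt hpre hne
      have := (hww q₂ h₂).length_le
      rw [hq] at *
      omega
    by_cases hq₂w : q₂ = w
    · subst hq₂w
      rw [Rrep, if_neg hq₁w]
      exact eqR_refl _
    · have hrw : Rrep α w q₁ = v * α (w.drop q₂.length) := by
        rw [Rrep, if_neg hq₁w, ← seg_trans hpre (hww q₂ h₂), hmul]
      have h1 : leR (Rrep α w q₁) v := ⟨α (w.drop q₂.length), hrw⟩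
      have h2 : leJ v (Rrep α w q₁) := leJ_trans hJv.1 (hCL3 q₁ h₁).2
      exact ⟨stabR h1 h2, h1⟩
  obtain ⟨hamem, haδ, hapre⟩ := anc_spec α w CL hpw q₁ h₁
  have hanceq : ancOf α w CL q₂ = ancOf α w CL q₁ := (anc_congr α w CL h₁ hδ).symm
  by_cases haq : ancOf α w CL q₁ = q₁
  · -- q₁ is its own anchor
    have hγ₁ : gammaOf α w CL q₁ = dfltOf (deltaF α w q₁) := by
      rw [gammaOf, if_pos haq]
    have hancq₂ne : ancOf α w CL q₂ ≠ q₂ := by rw [hanceq, haq]; exact hne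
    have hγ₂ : gammaOf α w CL q₂ = v := by
      rw [gammaOf, if_neg hancq₂ne, hanceq, haq]
    have hvd : v = dfltOf (deltaF α w q₁) := (hγ₂.symm.trans hγ.symm).trans hγ₁
    by_cases hex : ∃ e, e * e = e ∧ (deltaF α w q₁).1 e ∧ (deltaF α w q₁).2 e
    · have heps : epsOf (dataOf α w CL q₁) = hex.choose := by
        rw [dataOf, epsOf]
        exact dif_pos hex
      have hdflt : dfltOf (deltaF α w q₁) = hex.choose := by
        rw [dfltOf]; exact dif_pos hex
      rw [heps, ← hdflt, ← hvd]
    · have heps : epsOf (dataOf α w CL q₁) = gammaOf α w CL q₁ := by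
        rw [dataOf, epsOf]
        exact dif_neg hex
      rw [heps, hγ₁, ← hvd]
  · -- the anchor is strictly before q₁
    have hγ₁ : gammaOf α w CL q₁ = α (q₁.drop (ancOf α w CL q₁).length) := by
      rw [gammaOf, if_neg haq]
    have halt : (ancOf α w CL q₁).length < q₁.length := pref_lt hapre haq
    have hancq₂ne : ancOf α w CL q₂ ≠ q₂ := by
      rw [hanceq]
      intro hcontra
      have h5 := pref_lt hpre hne
      rw [hcontra] at halt
      omega
    have hγ₂ : gammaOf α w CL q₂ = α (q₂.drop (ancOf α w CL q₁).length) := by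
      rw [gammaOf, if_neg hancq₂ne, hanceq]
    have htel : α (q₂.drop (ancOf α w CL q₁).length)
        = α (q₁.drop (ancOf α w CL q₁).length) * v := by
      rw [← seg_trans hapre hpre, hmul]
    have hgv : α (q₁.drop (ancOf α w CL q₁).length) * v
        = α (q₁.drop (ancOf α w CL q₁).length) :=
      htel.symm.trans (hγ₂.symm.trans (hγ.symm.trans hγ₁))
    have hJg : Jp α w (α (q₁.drop (ancOf α w CL q₁).length)) :=
      hCL2 _ q₁ hamem h₁ hapre haq
    have hgL : eqL (α (q₁.drop (ancOf α w CL q₁).length)) (α q₁) := by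
      have h1 : leL (α q₁) (α (q₁.drop (ancOf α w CL q₁).length)) :=
        ⟨α (ancOf α w CL q₁), seg_split α hmul hapre⟩
      exact ⟨stabL h1 (leJ_trans hJg.1 (hCL1 q₁ h₁).2), h1⟩
    have hLiff : ∀ z : S, eqL z (α q₁) ↔ eqL z (α q₂) := by
      intro z
      have h2 := congrArg Prod.snd hδ
      have h3 := congrFun h2 z
      simp only [deltaF] at h3
      exact iff_of_eq h3
    have hvLg : eqL v (α (q₁.drop (ancOf α w CL q₁).length)) :=
      eqL_trans hvL (eqL_symm ((hLiff _).mp hgL))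
    obtain ⟨m, hm⟩ := hvLg.1
    have hidem : v * v = v := by
      calc v * v = m * (α (q₁.drop (ancOf α w CL q₁).length) * v) := by rw [hm, mul_assoc]
      _ = m * α (q₁.drop (ancOf α w CL q₁).length) := by rw [hgv]
      _ = v := hm.symm
    have hv2 : eqL v (α q₁) := (hLiff v).mpr hvL
    have hex : ∃ e, e * e = e ∧ (deltaF α w q₁).1 e ∧ (deltaF α w q₁).2 e :=
      ⟨v, hidem, hvR, hv2⟩
    have heps : epsOf (dataOf α w CL q₁) = hex.choose := by
      rw [dataOf, epsOf]; exact dif_pos hex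
    obtain ⟨hce, hc1, hc2⟩ := hex.choose_spec
    rw [heps]
    exact idem_unique hidem hce (eqR_trans hvR (eqR_symm hc1)) (eqL_trans hv2 (eqL_symm hc2))

theorem gamma_in (CL : List (List A))
    (hmul : ∀ u v : List A, α (u ++ v) = α u * α v)
    (hCL1 : ∀ q ∈ CL, Jp α w (α q))
    (hCL2 : ∀ q₁ q₂, q₁ ∈ CL → q₂ ∈ CL → q₁ <+: q₂ → q₁ ≠ q₂ →
      Jp α w (α (q₂.drop q₁.length)))
    (hCL3 : ∀ q ∈ CL, Jp α w (Rrep α w q))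
    (hpw : CL.Pairwise (fun a b => a <+: b ∧ a ≠ b))
    (hww : ∀ q ∈ CL, q <+: w) :
    ∀ q ∈ CL, (deltaF α w q).1 (gammaOf α w CL q) ∧ (deltaF α w q).2 (gammaOf α w CL q) ∧
      Jp α w (gammaOf α w CL q) := by
  intro q hq
  obtain ⟨hamem, haδ, hapre⟩ := anc_spec α w CL hpw q hq
  by_cases haq : ancOf α w CL q = q
  · have hγ : gammaOf α w CL q = dfltOf (deltaF α w q) := by rw [gammaOf, if_pos haq]
    by_cases hex : ∃ e, e * e = e ∧ (deltaF α w q).1 e ∧ (deltaF α w q).2 e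
    · have hd : dfltOf (deltaF α w q) = hex.choose := by rw [dfltOf]; exact dif_pos hex
      obtain ⟨-, hc1, hc2⟩ := hex.choose_spec
      rw [hγ, hd]
      refine ⟨hc1, hc2, ?_⟩
      exact eqJ_trans (eqR_eqJ hc1) (hCL3 q hq)
    · have hex2 : ∃ z, (deltaF α w q).1 z ∧ (deltaF α w q).2 z := by
        have hJJ : eqJ (Rrep α w q) (α q) := eqJ_trans (hCL3 q hq) (eqJ_symm (hCL1 q hq))
        obtain ⟨z, hz1, hz2⟩ := exists_eqR_eqL hJJ
        exact ⟨z, hz1, hz2⟩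
      have hd : dfltOf (deltaF α w q) = hex2.choose := by
        rw [dfltOf, dif_neg hex]; exact dif_pos hex2
      obtain ⟨hc1, hc2⟩ := hex2.choose_spec
      rw [hγ, hd]
      exact ⟨hc1, hc2, eqJ_trans (eqR_eqJ hc1) (hCL3 q hq)⟩
  · have hγ : gammaOf α w CL q = α (q.drop (ancOf α w CL q).length) := by
      rw [gammaOf, if_neg haq]
    have hJg : Jp α w (α (q.drop (ancOf α w CL q).length)) :=
      hCL2 _ q hamem hq hapre haq
    have hgL : eqL (α (q.drop (ancOf α w CL q).length)) (α q) := by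
      have h1 : leL (α q) (α (q.drop (ancOf α w CL q).length)) :=
        ⟨α (ancOf α w CL q), seg_split α hmul hapre⟩
      exact ⟨stabL h1 (leJ_trans hJg.1 (hCL1 q hq).2), h1⟩
    have hanw : ancOf α w CL q ≠ w := by
      intro hcontra
      have h5 := pref_lt hapre haq
      have h6 := (hww q hq).length_le
      rw [hcontra] at h5
      omega
    have hgR : eqR (α (q.drop (ancOf α w CL q).length)) (Rrep α w (ancOf α w CL q)) := by
      have hrw : Rrep α w (ancOf α w CL q)
          = α (q.drop (ancOf α w CL q).length) * α (w.drop q.length) := by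
        rw [Rrep, if_neg hanw, ← seg_trans hapre (hww q hq), hmul]
      have h1 : leR (Rrep α w (ancOf α w CL q)) (α (q.drop (ancOf α w CL q).length)) :=
        ⟨α (w.drop q.length), hrw⟩
      exact ⟨stabR h1 (leJ_trans hJg.1 (hCL3 _ hamem).2), h1⟩
    have hg1 : (deltaF α w q).1 (α (q.drop (ancOf α w CL q).length)) := by
      have h2 := congrArg Prod.fst haδ
      have h3 := congrFun h2 (α (q.drop (ancOf α w CL q).length))
      simp only [deltaF] at h3
      rw [deltaF]
      exact (iff_of_eq h3).mp hgR
    rw [hγ]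
    exact ⟨hg1, hgL, hJg⟩

/-- letter-list relation against a chain of cut positions -/
def Rel {A Δ : Type} (f : List A → Δ) (P : List A → Prop) :
    List A → List (DTree A × Δ) → Prop
  | _, [] => True
  | q, pr :: ls => ∃ q', pr.1.word = q'.drop q.length ∧ q <+: q' ∧ q ≠ q' ∧
      P q' ∧ pr.2 = f q' ∧ Rel f P q' ls

lemma rel_data {Δ : Type} (f : List A → Δ) (P : List A → Prop) :
    ∀ (ls : List (DTree A × Δ)) (q : List A), Rel f P q ls →
      ∀ pr ∈ ls, ∃ q', P q' ∧ pr.2 = f q' := by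
  intro ls
  induction ls with
  | nil => simp
  | cons b ls' ih =>
    intro q hrel pr hpr
    obtain ⟨q', hw, hpre, hne, hP, hd, ht⟩ := hrel
    rcases List.mem_cons.mp hpr with rfl | hpr
    · exact ⟨q', hP, hd⟩
    · exact ih q' ht pr hpr

lemma rel_seg {Δ : Type} (f : List A → Δ) (P : List A → Prop) :
    ∀ (l₂ : List (DTree A × Δ)) (q : List A) (ls : List (DTree A × Δ))
      (y : DTree A × Δ) (l₃ : List (DTree A × Δ)),
      Rel f P q ls → ls = l₂ ++ y :: l₃ →
      ∃ qy, P qy ∧ q <+: qy ∧ q ≠ qy ∧ y.2 = f qy ∧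
        wordsOf (l₂ ++ [y]) = qy.drop q.length := by
  intro l₂
  induction l₂ with
  | nil =>
    intro q ls y l₃ hrel hsp
    subst hsp
    obtain ⟨q', hw, hpre, hne, hP, hd, ht⟩ := hrel
    refine ⟨q', hP, hpre, hne, hd, ?_⟩
    simp [hw]
  | cons a l₂' ih =>
    intro q ls y l₃ hrel hsp
    subst hsp
    obtain ⟨q', hw, hpre, hne, hP, hd, ht⟩ := hrel
    obtain ⟨qy, hPy, hpre2, hne2, hdy, hwy⟩ := ih q' (l₂' ++ y :: l₃) y l₃ ht rfl
    refine ⟨qy, hPy, hpre.trans hpre2, ?_, hdy, ?_⟩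
    · intro hcontra
      have h5 := pref_lt hpre hne
      have h6 := pref_lt hpre2 hne2
      rw [hcontra] at h5
      omega
    · rw [List.cons_append, wordsOf_cons, hwy, hw, seg_trans hpre hpre2]

lemma rel_H2 {Δ : Type} (f : List A → Δ) (P : List A → Prop) (ε : Δ → S)
    (core : ∀ q₁ q₂, P q₁ → P q₂ → q₁ <+: q₂ → q₁ ≠ q₂ → f q₁ = f q₂ →
      α (q₂.drop q₁.length) = ε (f q₁)) :
    ∀ (l₁ : List (DTree A × Δ)) (q : List A) (ls : List (DTree A × Δ)),
      Rel f P q ls →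
      ∀ (x : DTree A × Δ) (l₂ : List (DTree A × Δ)) (y : DTree A × Δ)
        (l₃ : List (DTree A × Δ)),
        ls = l₁ ++ x :: (l₂ ++ y :: l₃) → x.2 = y.2 → α (wordsOf (l₂ ++ [y])) = ε x.2 := by
  intro l₁
  induction l₁ with
  | nil =>
    intro q ls hrel x l₂ y l₃ hsp hxy
    simp only [List.nil_append] at hsp
    subst hsp
    obtain ⟨q', hw, hpre, hne, hP, hd, ht⟩ := hrel
    obtain ⟨qy, hPy, hpre2, hne2, hdy, hwy⟩ := rel_seg f P l₂ q' (l₂ ++ y :: l₃) y l₃ ht rfl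
    rw [hwy]
    have hfeq : f q' = f qy := by rw [← hd, ← hdy, hxy]
    rw [core q' qy hP hPy hpre2 hne2 hfeq, hd]
  | cons a l₁' ih =>
    intro q ls hrel x l₂ y l₃ hsp hxy
    subst hsp
    obtain ⟨q', hw, hpre, hne, hP, hd, ht⟩ := hrel
    exact ih q' _ ht x l₂ y l₃ rfl hxy

end CoreFact
end DataSec
end SimonFF

namespace SimonFF
open DTree

section GCFacts

attribute [local instance] Classical.propDecidable

variable {S A : Type} [Monoid S] [Fintype S]
variable (α : List A → S) (w : List A)

lemma gc_cuts : ∀ {q bs}, GChain α w q bs → CutP α w q →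
    ∀ q' ∈ cutsList q bs, CutP α w q' := by
  intro q bs h
  induction h with
  | nil q h =>
    intro hq q' hq'
    simp only [cutsList, List.mem_singleton] at hq'
    subst hq'; exact hq
  | cons q z bs hval hmin htail ih =>
    intro hq q' hq'
    simp only [cutsList, List.mem_cons] at hq'
    rcases hq' with rfl | hq'
    · exact hq
    · exact ih hval.2.1 q' hq'

lemma gc_pref : ∀ {q bs}, GChain α w q bs → ∀ q' ∈ cutsList q bs, q <+: q' := by
  intro q bs h
  induction h with
  | nil q h =>
    intro q' hq'
    simp only [cutsList, List.mem_singleton] at hq'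
    subst hq'; exact List.prefix_refl q'
  | cons q z bs hval hmin htail ih =>
    intro q' hq'
    simp only [cutsList, List.mem_cons] at hq'
    rcases hq' with rfl | hq'
    · exact List.prefix_refl q'
    · exact (List.prefix_append q z).trans (ih q' hq')

lemma gc_pairwise : ∀ {q bs}, GChain α w q bs →
    (cutsList q bs).Pairwise (fun a b => a <+: b ∧ a ≠ b) := by
  intro q bs h
  induction h with
  | nil q h => simp [cutsList]
  | cons q z bs hval hmin htail ih =>
    simp only [cutsList, List.pairwise_cons]
    refine ⟨?_, ih⟩
    intro b hb
    have hpre := (List.prefix_append q z).trans (gc_pref α w htail b hb)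
    refine ⟨hpre, ?_⟩
    intro hcontra
    have h1 := (gc_pref α w htail b hb).length_le
    have h2 : z ≠ [] := hval.1
    have h3 : 0 < z.length := List.length_pos_iff.mpr h2
    rw [← hcontra] at h1
    simp only [List.length_append] at h1
    omega

lemma w_split3 (hmul : ∀ u v : List A, α (u ++ v) = α u * α v)
    {q₁ q₂ : List A} (h1 : q₁ <+: q₂) (h2 : q₂ <+: w) :
    α w = α q₁ * α (q₂.drop q₁.length) * α (w.drop q₂.length) := by
  rw [seg_split α hmul h2, seg_split α hmul h1]

lemma leJw_of_middle (hmul : ∀ u v : List A, α (u ++ v) = α u * α v)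
    {q₁ q₂ : List A} (h1 : q₁ <+: q₂) (h2 : q₂ <+: w) :
    leJ (α w) (α (q₂.drop q₁.length)) :=
  ⟨α q₁, α (w.drop q₂.length), w_split3 α w hmul h1 h2⟩

lemma gc_seg (hmul : ∀ u v : List A, α (u ++ v) = α u * α v) :
    ∀ {q bs}, GChain α w q bs → CutP α w q →
    ∀ q₁ q₂, q₁ ∈ cutsList q bs → q₂ ∈ cutsList q bs → q₁ <+: q₂ → q₁ ≠ q₂ →
      Jp α w (α (q₂.drop q₁.length)) := by
  intro q bs h
  induction h with
  | nil q h =>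
    intro hq q₁ q₂ h1 h2 hpre hne
    simp only [cutsList, List.mem_singleton] at h1 h2
    subst h1; subst h2
    exact absurd rfl hne
  | cons q z bs hval hmin htail ih =>
    intro hq q₁ q₂ h1 h2 hpre hne
    simp only [cutsList, List.mem_cons] at h1 h2
    rcases h1 with rfl | h1
    · rcases h2 with rfl | h2
      · exact absurd rfl hne
      · have hq2z : q₁ ++ z <+: q₂ := gc_pref α w htail q₂ h2
        have hq2cut : CutP α w q₂ := gc_cuts α w htail hval.2.1 q₂ h2
        have hupper : leJ (α (q₂.drop q₁.length)) (α z) := by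
          have hdec : q₂.drop q₁.length = z ++ q₂.drop (q₁ ++ z).length := by
            have h5 := seg_trans (List.prefix_append q₁ z) hq2z
            rw [List.drop_left] at h5
            exact h5.symm
          rw [hdec, hmul]
          exact ⟨1, α (q₂.drop (q₁ ++ z).length), by rw [one_mul]⟩
        have hlower : leJ (α w) (α (q₂.drop q₁.length)) :=
          leJw_of_middle α w hmul hpre hq2cut.1
        exact sandwich α w hupper hval.2.2 hlower
    · rcases h2 with rfl | h2
      · exfalso
        have h5 := (gc_pref α w htail q₁ h1).length_le
        have h6 := hpre.length_le
        have h7 : 0 < z.length := List.length_pos_iff.mpr hval.1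
        simp only [List.length_append] at h5
        omega
      · exact ih hval.2.1 q₁ q₂ h1 h2 hpre hne

end GCFacts
end SimonFF

namespace SimonFF
open DTree

section BuildSec

attribute [local instance] Classical.propDecidable

variable {S A : Type} [Monoid S] [Fintype S]
variable (α : List A → S) (w : List A)

lemma prefix_append_left {q F G : List A} (h : F <+: G) : q ++ F <+: q ++ G := by
  obtain ⟨t, rfl⟩ := h
  exact ⟨t, by rw [List.append_assoc]⟩

lemma leJ_of_prefix (hmul : ∀ u v : List A, α (u ++ v) = α u * α v)
    {q : List A} (h : q <+: w) : leJ (α w) (α q) :=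
  ⟨1, α (w.drop q.length), by rw [one_mul, ← seg_split α hmul h]⟩

lemma leJ_of_suffix (hmul : ∀ u v : List A, α (u ++ v) = α u * α v)
    (m : ℕ) : leJ (α w) (α (w.drop m)) :=
  ⟨α (w.take m), 1, by rw [mul_one, ← hmul, List.take_append_drop]⟩

lemma jp_T_of_prefix (hmul : ∀ u v : List A, α (u ++ v) = α u * α v)
    {q q' : List A} (hq : Jp α w (α q)) (hpre : q <+: q') (hw : q' <+: w) :
    Jp α w (α q') := by
  refine sandwich α w ?_ hq (leJ_of_prefix α w hmul hw)
  exact ⟨1, α (q'.drop q.length), by rw [one_mul, ← seg_split α hmul hpre]⟩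

lemma jp_R_of_prefix (hmul : ∀ u v : List A, α (u ++ v) = α u * α v)
    {q q' : List A} (hq : Jp α w (α (w.drop q'.length))) (hpre : q <+: q') (hw : q' <+: w) :
    Jp α w (α (w.drop q.length)) := by
  refine sandwich α w ?_ hq (leJ_of_suffix α w hmul q.length)
  refine ⟨α (q'.drop q.length), 1, ?_⟩
  rw [mul_one, ← hmul, seg_trans hpre hw]

theorem buildLs {Δ : Type} (f : List A → Δ) (P : List A → Prop)
    (hone : α [] = 1) (hmul : ∀ u v : List A, α (u ++ v) = α u * α v)
    (hn1 : ¬ Jp α w 1) (h₀ : ℕ)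
    (IHhigh : ∀ w' : List A, leJ (α w) (α w') → ¬ Jp α w (α w') →
      ∃ t : DTree A, t.word = w' ∧ DTree.IsFF α t ∧ 1 + t.height ≤ h₀)
    (hPw : P w) :
    ∀ q bs, GChain α w q bs → CutP α w q → (∀ q' ∈ cutsList q bs, P q') →
    ∃ ls : List (DTree A × Δ), Rel f P q ls ∧ (∀ pr ∈ ls, DTree.IsFF α pr.1) ∧
      (∀ pr ∈ ls.dropLast, pr.1.height ≤ h₀) ∧ (∀ pr ∈ ls, pr.1.height ≤ h₀ + 1) ∧
      wordsOf ls = w.drop q.length ∧ ls ≠ [] ∧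
      (∀ pr ∈ ls.dropLast, Jp α w (α pr.1.word)) := by
  intro q bs hch
  induction hch with
  | nil q hstop =>
    intro hq hPsub
    set G := w.drop q.length with hG
    have hGJp : Jp α w (α G) := hq.2.2
    have hGne : G ≠ [] := by
      intro hc
      rw [hc, hone] at hGJp
      exact hn1 hGJp
    have hqw : q ≠ w := by
      intro hc
      apply hGne
      rw [hG, hc, List.drop_length]
    have hqG : q ++ G = w := prefix_drop_append hq.1
    -- the last suffix-good position inside G
    have hP0 : Jp α w (α (G.drop 0)) := by simpa using hGJp
    set dloc := Nat.findGreatest (fun ℓ => Jp α w (α (G.drop ℓ))) G.length with hdloc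
    have hdspec : Jp α w (α (G.drop dloc)) := by
      rw [hdloc]
      exact Nat.findGreatest_spec (P := fun ℓ => Jp α w (α (G.drop ℓ))) (Nat.zero_le _) hP0
    have hnotlen : ¬ Jp α w (α (G.drop G.length)) := by
      rw [List.drop_length, hone]
      exact hn1
    have hdle : dloc ≤ G.length := by
      rw [hdloc]; exact Nat.findGreatest_le _
    have hdlt : dloc < G.length := by
      rcases Nat.lt_or_ge dloc G.length with h | h
      · exact h
      · exfalso
        have : dloc = G.length := by omega
        rw [this] at hdspec
        exact hnotlen hdspec
    set F := G.take dloc with hF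
    have hFlen : F.length = dloc := by
      rw [hF, List.length_take]; omega
    have hqFpre : q ++ F <+: w := by
      rw [← hqG]
      exact prefix_append_left (List.take_prefix _ _)
    have hdropqF : w.drop (q ++ F).length = G.drop dloc := by
      conv_lhs => rw [← hqG]
      rw [List.length_append, hFlen]
      rw [List.drop_length_add_append]  -- (q ++ G).drop (q.length + dloc) = G.drop dloc
    have hFhigh : ¬ Jp α w (α F) := by
      by_cases hd0 : dloc = 0
      · rw [hF, hd0, List.take_zero, hone]
        exact hn1
      · intro hcontra
        apply hstop F
        refine ⟨?_, ⟨hqFpre, ?_, ?_⟩, hcontra⟩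
        · intro hc
          rw [← hFlen, hc] at hd0
          simp at hd0
        · exact jp_T_of_prefix α w hmul hq.2.1 (List.prefix_append q F) hqFpre
        · rw [hdropqF]; exact hdspec
    have hFle : leJ (α w) (α F) := by
      have h5 := leJw_of_middle α w hmul (List.prefix_append q F) hqFpre
      rw [List.drop_left] at h5
      exact h5
    obtain ⟨tF, htFw, htFf, htFh⟩ := IHhigh F hFle hFhigh
    -- the strict suffix after dloc+1
    set y := G.drop dloc with hy
    have hyne : y ≠ [] := by
      rw [hy]
      intro hc
      have := congrArg List.length hc
      simp only [List.length_drop] at this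
      simp at this
      omega
    rcases hyd : y with _ | ⟨b, y'⟩
    · exact absurd hyd hyne
    have hy' : y' = G.drop (dloc + 1) := by
      have : y.tail = G.drop (dloc + 1) := by
        rw [hy, List.tail_drop]
      rw [hyd] at this
      simpa using this
    have hy'high : ¬ Jp α w (α y') := by
      rw [hy']
      by_cases hcase : dloc + 1 ≤ G.length
      · refine Nat.findGreatest_is_greatest (P := fun ℓ => Jp α w (α (G.drop ℓ))) ?_ hcase
        omega
      · omega
    have hy'le : leJ (α w) (α y') := by
      have h5 : y' = w.drop (q.length + (dloc + 1)) := by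
        rw [hy', hG, List.drop_drop]
      rw [h5]
      exact leJ_of_suffix α w hmul _
    obtain ⟨tY, htYw, htYf, htYh⟩ := IHhigh y' hy'le hy'high
    have hbylem : [b] ++ y' = y := by simp [hyd]
    have hFyG : F ++ ([b] ++ y') = G := by
      rw [hbylem, hy, hF]
      exact List.take_append_drop dloc G
    have hword : (DTree.node [tF, DTree.node [DTree.leaf (some b), tY]]).word = G := by
      rw [word_node2, word_node2, htFw, htYw, word_leaf_some]
      exact hFyG
    refine ⟨[(DTree.node [tF, DTree.node [DTree.leaf (some b), tY]], f w)], ?_, ?_, ?_, ?_, ?_, ?_, ?_⟩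
    · refine ⟨w, ?_, hq.1, hqw, hPw, rfl, trivial⟩
      exact hword.trans hG
    · intro pr hpr
      simp only [List.mem_singleton] at hpr
      subst hpr
      exact isFF_node2 α htFf (isFF_node2 α (isFF_leaf α _) htYf)
    · intro pr hpr; simp at hpr
    · intro pr hpr
      simp only [List.mem_singleton] at hpr
      subst hpr
      have h6 : (DTree.node [DTree.leaf (some b), tY]).height ≤ h₀ := by
        have h9 := height_node2_le (t₁ := DTree.leaf (some b)) (t₂ := tY)
          (H := h₀ - 1) (by simp [height_leaf]) (by omega)
        omega
      have h7 := height_node2_le (t₁ := tF) (t₂ := DTree.node [DTree.leaf (some b), tY])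
        (H := h₀) (by omega) (by omega)
      exact h7
    · have h5 : wordsOf [((DTree.node [tF, DTree.node [DTree.leaf (some b), tY]] : DTree A), f w)]
          = (DTree.node [tF, DTree.node [DTree.leaf (some b), tY]]).word := wordsOf_singleton _
      exact (h5.trans hword).trans hG
    · simp
    · intro pr hpr; simp at hpr
  | cons q z bs hval hmin htail ih =>
    intro hq hPsub
    have hzne : z ≠ [] := hval.1
    have hcut2 : CutP α w (q ++ z) := hval.2.1
    have hPsub' : ∀ q' ∈ cutsList (q ++ z) bs, P q' := by
      intro q' hq'
      exact hPsub q' (by simp only [cutsList, List.mem_cons]; exact Or.inr hq')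
    obtain ⟨ls', hrel', hff', hht', hhtall', hwords', hne', hJp'⟩ := ih hcut2 hPsub'
    -- the block letter
    set inner := z.dropLast with hinner
    have hinpre : inner <+: z := List.dropLast_prefix z
    have hinne : inner ≠ z := by
      intro hc
      have := congrArg List.length hc
      rw [hinner, List.length_dropLast] at this
      have : 0 < z.length := List.length_pos_iff.mpr hzne
      omega
    have hqinpre : q ++ inner <+: w := (prefix_append_left hinpre).trans hcut2.1
    have hinhigh : ¬ Jp α w (α inner) := by
      by_cases hin0 : inner = []
      · rw [hin0, hone]; exact hn1
      · intro hcontra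
        apply hmin inner hinpre hinne
        refine ⟨hin0, ⟨hqinpre, ?_, ?_⟩, hcontra⟩
        · exact jp_T_of_prefix α w hmul hq.2.1 (List.prefix_append q inner) hqinpre
        · exact jp_R_of_prefix α w hmul hcut2.2.2 (prefix_append_left hinpre) hcut2.1
    have hinle : leJ (α w) (α inner) := by
      have h5 := leJw_of_middle α w hmul (List.prefix_append q inner) hqinpre
      rw [List.drop_left] at h5
      exact h5
    obtain ⟨tIn, htInw, htInf, htInh⟩ := IHhigh inner hinle hinhigh
    have htzw : (DTree.node [tIn, DTree.leaf (some (z.getLast hzne))]).word = z := by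
      rw [word_node2, htInw, word_leaf_some, hinner]
      exact List.dropLast_append_getLast hzne
    have htzh : (DTree.node [tIn, DTree.leaf (some (z.getLast hzne))]).height ≤ h₀ := by
      have h8 := height_node2_le (t₁ := tIn) (t₂ := DTree.leaf (some (z.getLast hzne)))
        (H := h₀ - 1) (by omega) (by simp [height_leaf])
      omega
    refine ⟨(DTree.node [tIn, DTree.leaf (some (z.getLast hzne))], f (q ++ z)) :: ls',
      ?_, ?_, ?_, ?_, ?_, by simp, ?_⟩
    · refine ⟨q ++ z, ?_, List.prefix_append q z, ?_, ?_, rfl, hrel'⟩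
      · rw [htzw, List.drop_left]
      · intro hc
        have := congrArg List.length hc
        simp only [List.length_append] at this
        have : 0 < z.length := List.length_pos_iff.mpr hzne
        omega
      · refine hPsub (q ++ z) ?_
        simp only [cutsList, List.mem_cons]
        exact Or.inr (head_mem_cutsList _ _)
    · intro pr hpr
      rcases List.mem_cons.mp hpr with rfl | hpr
      · exact isFF_node2 α htInf (isFF_leaf α _)
      · exact hff' pr hpr
    · intro pr hpr
      rw [List.dropLast_cons_of_ne_nil hne'] at hpr
      rcases List.mem_cons.mp hpr with rfl | hpr
      · exact htzh
      · exact hht' pr hpr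
    · intro pr hpr
      rcases List.mem_cons.mp hpr with rfl | hpr
      · show (DTree.node [tIn, DTree.leaf (some (z.getLast hzne))]).height ≤ h₀ + 1
        omega
      · exact hhtall' pr hpr
    · rw [wordsOf_cons, htzw, hwords']
      have h5 := seg_trans (List.prefix_append q z) hcut2.1
      rw [List.drop_left] at h5
      exact h5
    · intro pr hpr
      rw [List.dropLast_cons_of_ne_nil hne'] at hpr
      rcases List.mem_cons.mp hpr with rfl | hpr
      · rw [htzw]; exact hval.2.2
      · exact hJp' pr hpr

end BuildSec
end SimonFF

namespace SimonFF
open DTree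

section HelpSec
attribute [local instance] Classical.propDecidable

variable {S A : Type} [Monoid S] [Fintype S]
variable (α : List A → S)

noncomputable def JupF (s : S) : Finset S := Finset.univ.filter (fun t => leJ s t)

noncomputable def JF (w : List A) : Finset S := Finset.univ.filter (fun t => Jp α w t)

lemma JF_subset_JupF (w : List A) : JF α w ⊆ JupF (α w) := by
  intro t ht
  simp only [JF, JupF, Finset.mem_filter, Finset.mem_univ, true_and] at *
  exact ht.2

lemma high_card (w : List A) {x : S} (hle : leJ (α w) x) (hnj : ¬ Jp α w x) :
    (JupF x).card + (JF α w).card ≤ (JupF (α w)).card := by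
  have hsub : JupF x ⊆ JupF (α w) \ JF α w := by
    intro t ht
    simp only [JupF, JF, Finset.mem_sdiff, Finset.mem_filter, Finset.mem_univ, true_and] at *
    constructor
    · exact leJ_trans hle ht
    · intro hJt
      exact hnj ⟨leJ_trans ht hJt.1, hle⟩
  have h1 := Finset.card_le_card hsub
  rw [Finset.card_sdiff_of_subset (JF_subset_JupF α w)] at h1
  have h2 := Finset.card_le_card (JF_subset_JupF α w)
  omega

lemma buildUnit (w : List A) :
    ∀ (v q : List A), q ++ v = w →
    ∃ ls : List (DTree A × S),
      Rel (fun q' => α q') (fun q' => q' <+: w ∧ q' ≠ []) q ls ∧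
      (∀ pr ∈ ls, DTree.IsFF α pr.1) ∧ (∀ pr ∈ ls, pr.1.height ≤ 0) ∧
      wordsOf ls = v := by
  intro v
  induction v with
  | nil =>
    intro q hq
    exact ⟨[], trivial, by simp, by simp, rfl⟩
  | cons b v' ih =>
    intro q hq
    obtain ⟨ls', h1, h2, h3, h4⟩ := ih (q ++ [b]) (by rw [List.append_assoc]; exact hq)
    refine ⟨(DTree.leaf (some b), α (q ++ [b])) :: ls', ?_, ?_, ?_, ?_⟩
    · refine ⟨q ++ [b], ?_, List.prefix_append q [b], ?_, ⟨?_, by simp⟩, rfl, h1⟩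
      · rw [word_leaf_some, List.drop_left]
      · intro hc
        have := congrArg List.length hc
        simp at this
      · exact ⟨v', by rw [List.append_assoc]; exact hq⟩
    · intro pr hpr
      rcases List.mem_cons.mp hpr with rfl | hpr
      · exact isFF_leaf α _
      · exact h2 pr hpr
    · intro pr hpr
      rcases List.mem_cons.mp hpr with rfl | hpr
      · simp [height_leaf]
      · exact h3 pr hpr
    · rw [wordsOf_cons, word_leaf_some, h4]
      rfl

lemma data_card (w : List A) (CL : List (List A))
    (hmul : ∀ u v : List A, α (u ++ v) = α u * α v)
    (hCL1 : ∀ q ∈ CL, Jp α w (α q))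
    (hCL2 : ∀ q₁ q₂, q₁ ∈ CL → q₂ ∈ CL → q₁ <+: q₂ → q₁ ≠ q₂ →
      Jp α w (α (q₂.drop q₁.length)))
    (hCL3 : ∀ q ∈ CL, Jp α w (Rrep α w q))
    (hpw : CL.Pairwise (fun a b => a <+: b ∧ a ≠ b))
    (hww : ∀ q ∈ CL, q <+: w)
    (ds : List (((S → Prop) × (S → Prop)) × S))
    (hds : ∀ d ∈ ds, ∃ q, q ∈ CL ∧ d = dataOf α w CL q) :
    ds.toFinset.card ≤ (JF α w).card := by
  have hg := gamma_in α w CL hmul hCL1 hCL2 hCL3 hpw hww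
  refine Finset.card_le_card_of_injOn (fun d => d.2) ?_ ?_
  · intro d hd
    obtain ⟨q, hq, rfl⟩ := hds d (List.mem_toFinset.mp hd)
    simp only [JF, Finset.mem_filter, Finset.mem_univ, true_and]
    exact Finset.mem_coe.mpr (Finset.mem_filter.mpr ⟨Finset.mem_univ _, (hg q hq).2.2⟩)
  · intro d1 hd1 d2 hd2 heq
    obtain ⟨q1, hq1, hd1eq⟩ := hds d1 (by simpa using hd1)
    obtain ⟨q2, hq2, hd2eq⟩ := hds d2 (by simpa using hd2)
    subst hd1eq
    subst hd2eq
    obtain ⟨hg11, hg12, -⟩ := hg q1 hq1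
    obtain ⟨hg21, hg22, -⟩ := hg q2 hq2
    have hγ : gammaOf α w CL q1 = gammaOf α w CL q2 := heq
    have hR1 : eqR (gammaOf α w CL q1) (Rrep α w q1) := hg11
    have hR2 : eqR (gammaOf α w CL q1) (Rrep α w q2) := by rw [hγ]; exact hg21
    have hL1 : eqL (gammaOf α w CL q1) (α q1) := hg12
    have hL2 : eqL (gammaOf α w CL q1) (α q2) := by rw [hγ]; exact hg22
    have h1 : deltaF α w q1 = deltaF α w q2 := by
      unfold deltaF
      refine Prod.ext ?_ ?_
      · funext z
        apply propext
        constructor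
        · intro hz; exact eqR_trans (eqR_trans hz (eqR_symm hR1)) hR2
        · intro hz; exact eqR_trans (eqR_trans hz (eqR_symm hR2)) hR1
      · funext z
        apply propext
        constructor
        · intro hz; exact eqL_trans (eqL_trans hz (eqL_symm hL1)) hL2
        · intro hz; exact eqL_trans (eqL_trans hz (eqL_symm hL2)) hL1
    show dataOf α w CL q1 = dataOf α w CL q2
    unfold dataOf
    rw [h1, hγ]

end HelpSec
end SimonFF

namespace SimonFF
open DTree

section MainSec
attribute [local instance] Classical.propDecidable

variable {S A : Type} [Monoid S] [Fintype S]

theorem mainAux (α : List A → S) (hone : α [] = 1)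
    (hmul : ∀ u v : List A, α (u ++ v) = α u * α v) :
    ∀ (N : ℕ) (w : List A), (JupF (α w)).card ≤ N →
    ∃ t : DTree A, t.word = w ∧ DTree.IsFF α t ∧ t.height ≤ 3 * N := by
  intro N
  induction N using Nat.strong_induction_on with
  | _ N IH =>
  intro w hN
  by_cases hu : Jp α w 1
  · -- group of units case
    obtain ⟨ls, hrel, hff, hht, hwords⟩ := buildUnit α w w [] rfl
    have hcore : ∀ q₁ q₂ : List A, (q₁ <+: w ∧ q₁ ≠ []) → (q₂ <+: w ∧ q₂ ≠ []) → q₁ <+: q₂ →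
        q₁ ≠ q₂ → α q₁ = α q₂ →
        α (q₂.drop q₁.length) = (fun _ : S => (1 : S)) (α q₁) := by
      intro q₁ q₂ hP1 hP2 hpre hne hfe
      have hsplit : α q₂ = α q₁ * α (q₂.drop q₁.length) := seg_split α hmul hpre
      have hunit : IsUnit (α q₁) := by
        apply isUnit_of_leJ_one
        exact leJ_trans hu.1 (leJ_of_prefix α w hmul hP1.1)
      have hcc : α q₁ * α (q₂.drop q₁.length) = α q₁ * 1 := by
        rw [mul_one, ← hsplit]
        exact hfe.symm
      exact hunit.mul_left_cancel hcc
    have hH2 : H2 α (fun _ => (1 : S)) ls := by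
      intro l₁ x l₂ y l₃ hsp hxy
      exact rel_H2 α _ _ (fun _ => (1 : S)) hcore l₁ [] ls hrel x l₂ y l₃ hsp hxy
    have hcard : ((ls.map Prod.snd).toFinset).card ≤ N := by
      have hsub : (ls.map Prod.snd).toFinset ⊆ JupF (α w) := by
        intro t ht
        simp only [List.mem_toFinset, List.mem_map] at ht
        obtain ⟨pr, hpr, rfl⟩ := ht
        obtain ⟨q', hPq, hdq⟩ := rel_data _ _ ls [] hrel pr hpr
        rw [hdq]
        simp only [JupF, Finset.mem_filter, Finset.mem_univ, true_and]
        exact leJ_of_prefix α w hmul hPq.1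
      exact le_trans (Finset.card_le_card hsub) hN
    obtain ⟨t, htw, htf, hth⟩ := lemU α (fun _ => (1:S)) hmul N 0 ls hff hht hH2 hcard
    exact ⟨t, by rw [htw, hwords], htf, by omega⟩
  · -- non-unit case
    have hexc : ∃ ℓ, Jp α w (α (w.take ℓ)) :=
      ⟨w.length, by rw [List.take_length]; exact eqJ_refl _⟩
    set c := Nat.find hexc with hc
    have hcspec : Jp α w (α (w.take c)) := Nat.find_spec hexc
    have hc0 : c ≠ 0 := by
      intro h
      rw [h, List.take_zero, hone] at hcspec
      exact hu hcspec
    have hcle : c ≤ w.length :=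
      Nat.find_le (by rw [List.take_length]; exact eqJ_refl _)
    set x := w.take c with hx
    have hxpre : x <+: w := List.take_prefix c w
    have hxlen : x.length = c := by rw [hx, List.length_take]; omega
    have hxne : x ≠ [] := by
      intro h
      rw [h] at hxlen
      simp at hxlen
      exact hc0 hxlen.symm
    have hdropx : w.drop x.length = w.drop c := by rw [hxlen]
    have hsJ : (α w) ∈ JF α w := by
      simp only [JF, Finset.mem_filter, Finset.mem_univ, true_and]
      exact eqJ_refl _
    have hJc1 : 1 ≤ (JF α w).card := Finset.card_pos.mpr ⟨α w, hsJ⟩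
    have hJcN : (JF α w).card ≤ N :=
      le_trans (Finset.card_le_card (JF_subset_JupF α w)) hN
    set Jc := (JF α w).card with hJc
    set h₀ := 3 * (N - Jc) + 1 with hh₀
    have IHhigh : ∀ w' : List A, leJ (α w) (α w') → ¬ Jp α w (α w') →
        ∃ t : DTree A, t.word = w' ∧ DTree.IsFF α t ∧ 1 + t.height ≤ h₀ := by
      intro w' hle hnj
      have hcard' : (JupF (α w')).card ≤ N - Jc := by
        have := high_card α w hle hnj
        omega
      obtain ⟨t, h1, h2, h3⟩ := IH (N - Jc) (by omega) w' hcard'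
      exact ⟨t, h1, h2, by omega⟩
    -- the tree for x = (strict prefix) ++ (last letter)
    have hpxform : x.dropLast = w.take (c - 1) := by
      rw [hx, List.dropLast_eq_take, List.take_take, List.length_take]
      congr 1
      omega
    have hpxhigh : ¬ Jp α w (α x.dropLast) := by
      rw [hpxform]
      exact Nat.find_min hexc (by omega)
    have hpxle : leJ (α w) (α x.dropLast) :=
      leJ_of_prefix α w hmul ((List.dropLast_prefix x).trans hxpre)
    obtain ⟨tpx, htpxw, htpxf, htpxh⟩ := IHhigh x.dropLast hpxle hpxhigh
    have htxw : (DTree.node [tpx, DTree.leaf (some (x.getLast hxne))]).word = x := by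
      rw [word_node2, htpxw, word_leaf_some]
      exact List.dropLast_append_getLast hxne
    have htxf : DTree.IsFF α (DTree.node [tpx, DTree.leaf (some (x.getLast hxne))]) :=
      isFF_node2 α htpxf (isFF_leaf α _)
    have htxh : (DTree.node [tpx, DTree.leaf (some (x.getLast hxne))]).height ≤ h₀ := by
      have h8 := height_node2_le (t₁ := tpx) (t₂ := DTree.leaf (some (x.getLast hxne)))
        (H := h₀ - 1) (by omega) (by simp [height_leaf])
      omega
    by_cases hd : Jp α w (α (w.drop c))
    · -- main case : good cut positions exist
      have hxcut : CutP α w x := ⟨hxpre, hcspec, by rw [hdropx]; exact hd⟩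
      obtain ⟨bs, hbs⟩ := gchain_exists α w w.length x (by omega)
      set CL0 := cutsList x bs with hCL0
      set CLfull := CL0 ++ [w] with hCLfull
      have hCL0cut : ∀ q ∈ CL0, CutP α w q := gc_cuts α w hbs hxcut
      have hCL0nw : ∀ q ∈ CL0, q ≠ w := by
        intro q hq hcontra
        have h5 := (hCL0cut q hq).2.2
        rw [hcontra, List.drop_length, hone] at h5
        exact hu h5
      have hmemw : ∀ q, q ∈ CLfull → q <+: w ∧ Jp α w (α q) := by
        intro q hq
        rcases List.mem_append.mp hq with hq | hq
        · exact ⟨(hCL0cut q hq).1, (hCL0cut q hq).2.1⟩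
        · simp only [List.mem_singleton] at hq
          rw [hq]
          exact ⟨List.prefix_refl w, eqJ_refl _⟩
      have hCL1 : ∀ q ∈ CLfull, Jp α w (α q) := fun q hq => (hmemw q hq).2
      have hww : ∀ q ∈ CLfull, q <+: w := fun q hq => (hmemw q hq).1
      have hCL3 : ∀ q ∈ CLfull, Jp α w (Rrep α w q) := by
        intro q hq
        rcases List.mem_append.mp hq with hq | hq
        · rw [Rrep, if_neg (hCL0nw q hq)]
          exact (hCL0cut q hq).2.2
        · simp only [List.mem_singleton] at hq
          rw [hq, Rrep, if_pos rfl]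
          exact eqJ_refl _
      have hCL2 : ∀ q₁ q₂, q₁ ∈ CLfull → q₂ ∈ CLfull → q₁ <+: q₂ → q₁ ≠ q₂ →
          Jp α w (α (q₂.drop q₁.length)) := by
        intro q₁ q₂ h1 h2 hpre hne
        rcases List.mem_append.mp h2 with h2 | h2
        · rcases List.mem_append.mp h1 with h1 | h1
          · exact gc_seg α w hmul hbs hxcut q₁ q₂ h1 h2 hpre hne
          · exfalso
            simp only [List.mem_singleton] at h1
            have h5 := hpre.length_le
            have h6 := (hCL0cut q₂ h2).1.length_le
            rw [h1] at h5
            exact hne (hpre.eq_of_length (by rw [h1]; omega))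
        · simp only [List.mem_singleton] at h2
          rw [h2]
          rcases List.mem_append.mp h1 with h1 | h1
          · exact (hCL0cut q₁ h1).2.2
          · simp only [List.mem_singleton] at h1
            exact absurd (h1.trans h2.symm) hne
      have hpwfull : CLfull.Pairwise (fun a b => a <+: b ∧ a ≠ b) := by
        rw [hCLfull, List.pairwise_append]
        refine ⟨gc_pairwise α w hbs, by simp, ?_⟩
        intro a ha b hb
        simp only [List.mem_singleton] at hb
        rw [hb]
        exact ⟨(hCL0cut a ha).1, hCL0nw a ha⟩
      obtain ⟨ls', hrel', hff', hht', hhtall', hwords', hlsne', hJp'⟩ :=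
        buildLs α w (dataOf α w CLfull) (fun q => q ∈ CLfull) hone hmul hu h₀ IHhigh
          (by rw [hCLfull]; simp) x bs hbs hxcut
          (fun q' hq' => List.mem_append_left _ hq')
      have hxmem : x ∈ CLfull := List.mem_append_left _ (head_mem_cutsList x bs)
      have hrelfull : Rel (dataOf α w CLfull) (fun q => q ∈ CLfull) []
          ((DTree.node [tpx, DTree.leaf (some (x.getLast hxne))], dataOf α w CLfull x) :: ls') := by
        refine ⟨x, ?_, List.nil_prefix, fun h => hxne h.symm, hxmem, rfl, hrel'⟩
        rw [htxw, List.length_nil, List.drop_zero]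
      have hwordsfull : wordsOf
          ((DTree.node [tpx, DTree.leaf (some (x.getLast hxne))], dataOf α w CLfull x) :: ls') = w := by
        rw [wordsOf_cons, htxw, hwords']
        exact prefix_drop_append hxpre
      have hfffull : ∀ pr ∈
          ((DTree.node [tpx, DTree.leaf (some (x.getLast hxne))], dataOf α w CLfull x) :: ls'),
          DTree.IsFF α pr.1 := by
        intro pr hpr
        rcases List.mem_cons.mp hpr with rfl | hpr
        · exact htxf
        · exact hff' pr hpr
      have hH2full : H2 α epsOf
          ((DTree.node [tpx, DTree.leaf (some (x.getLast hxne))], dataOf α w CLfull x) :: ls') := by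
        intro l₁ x' l₂ y l₃ hsp hxy
        exact rel_H2 α _ _ _
          (core_fact α w CLfull hmul hCL1 hCL2 hCL3 hpwfull hww)
          l₁ [] _ hrelfull x' l₂ y l₃ hsp hxy
      have hcardfull :
          ((((DTree.node [tpx, DTree.leaf (some (x.getLast hxne))], dataOf α w CLfull x) :: ls').map
            Prod.snd).toFinset).card ≤ Jc := by
        rw [hJc]
        refine data_card α w CLfull hmul hCL1 hCL2 hCL3 hpwfull hww _ ?_
        intro d hd
        simp only [List.mem_map] at hd
        obtain ⟨pr, hpr, rfl⟩ := hd
        obtain ⟨q', hPq, hdq⟩ := rel_data _ _ _ [] hrelfull pr hpr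
        exact ⟨q', hPq, hdq⟩
      rcases Nat.lt_or_ge Jc 2 with hJc2 | hJc2
      · -- |J| = 1 : a single idempotent node does the job
        have hJceq : (JF α w).card = 1 := by omega
        have hallJ : ∀ t : S, Jp α w t → t = α w := by
          obtain ⟨a, ha⟩ := Finset.card_eq_one.mp hJceq
          intro t ht
          have h5 : t ∈ JF α w := by
            simp only [JF, Finset.mem_filter, Finset.mem_univ, true_and]
            exact ht
          have h6 := hsJ
          rw [ha] at h5 h6
          simp only [Finset.mem_singleton] at h5 h6
          rw [h5, h6]
        have hxval : α x = α w := hallJ _ hcspec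
        set mids := (DTree.node [tpx, DTree.leaf (some (x.getLast hxne))]) ::
          ls'.dropLast.map Prod.fst with hmids
        have hvals : ∀ t ∈ mids, α (DTree.word t) = α w := by
          intro t ht
          rcases List.mem_cons.mp ht with rfl | ht
          · rw [htxw]; exact hxval
          · obtain ⟨pr, hpr, rfl⟩ := List.mem_map.mp ht
            exact hallJ _ (hJp' pr hpr)
        have hnodeff : DTree.IsFF α (DTree.node mids) := by
          rw [isFF_node_iff]
          constructor
          · intro hlen
            refine ⟨α w, ?_, hvals⟩
            rcases hlse : ls' with _ | ⟨pr0, rest⟩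
            · exact absurd hlse hlsne'
            · have hrel0 : Rel (dataOf α w CLfull) (fun q => q ∈ CLfull) x (pr0 :: rest) := by
                rw [← hlse]; exact hrel'
              obtain ⟨q', hw0, hpre0, hne0, hP0, hd0, ht0⟩ := hrel0
              have h7 : α q' = α x * α (pr0.1.word) := by
                rw [hw0]
                exact seg_split α hmul hpre0
              have h8 : α q' = α w := hallJ _ (hCL1 q' hP0)
              have hlen2 : 2 ≤ ls'.dropLast.length := by
                rw [hmids] at hlen
                simp only [List.length_cons, List.length_map] at hlen
                omega
              have hrestne : rest ≠ [] := by
                intro hcon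
                rw [hlse, hcon] at hlen2
                simp at hlen2
              have hpr0mem : pr0 ∈ ls'.dropLast := by
                rw [hlse, List.dropLast_cons_of_ne_nil hrestne]
                simp
              have h10 : α pr0.1.word = α w := hallJ _ (hJp' pr0 hpr0mem)
              rw [hxval, h10] at h7
              rw [← h7]
              exact h8
          · intro t ht
            rcases List.mem_cons.mp ht with rfl | ht
            · exact htxf
            · obtain ⟨pr, hpr, rfl⟩ := List.mem_map.mp ht
              exact hff' pr (List.dropLast_subset _ hpr)
        have hnodeh : (DTree.node mids).height ≤ h₀ + 1 := by
          refine height_node_le ?_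
          intro t ht
          rcases List.mem_cons.mp ht with rfl | ht
          · exact htxh
          · obtain ⟨pr, hpr, rfl⟩ := List.mem_map.mp ht
            exact hht' pr hpr
        have hlastmem : ls'.getLast hlsne' ∈ ls' := List.getLast_mem hlsne'
        have hlastff : DTree.IsFF α (ls'.getLast hlsne').1 := hff' _ hlastmem
        have hlasth : (ls'.getLast hlsne').1.height ≤ h₀ + 1 := hhtall' _ hlastmem
        have hsplitls := List.dropLast_append_getLast hlsne'
        have hmidword : (DTree.node mids).word = x ++ wordsOf ls'.dropLast := by
          rw [word_node, hmids]
          simp only [List.map_cons, List.flatten_cons, htxw]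
          congr 1
          rw [wordsOf, List.map_map]
          rfl
        refine ⟨DTree.node [DTree.node mids, (ls'.getLast hlsne').1], ?_, ?_, ?_⟩
        · rw [word_node2, hmidword]
          have h11 : wordsOf ls'.dropLast ++ (ls'.getLast hlsne').1.word = wordsOf ls' := by
            conv_rhs => rw [← hsplitls]
            rw [wordsOf_append, wordsOf_singleton]
          rw [List.append_assoc, h11, hwords']
          exact prefix_drop_append hxpre
        · exact isFF_node2 α hnodeff hlastff
        · have h12 := height_node2_le (t₁ := DTree.node mids) (t₂ := (ls'.getLast hlsne').1)
            (H := h₀ + 1) hnodeh hlasth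
          omega
      · -- |J| ≥ 2 : apply the main combinatorial lemma
        have hhtfull : ∀ pr ∈
            ((DTree.node [tpx, DTree.leaf (some (x.getLast hxne))], dataOf α w CLfull x) :: ls').dropLast,
            pr.1.height ≤ h₀ := by
          rw [List.dropLast_cons_of_ne_nil hlsne']
          intro pr hpr
          rcases List.mem_cons.mp hpr with rfl | hpr
          · exact htxh
          · exact hht' pr hpr
        have hhtallfull : ∀ pr ∈
            ((DTree.node [tpx, DTree.leaf (some (x.getLast hxne))], dataOf α w CLfull x) :: ls'),
            pr.1.height ≤ h₀ + 1 := by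
          intro pr hpr
          rcases List.mem_cons.mp hpr with rfl | hpr
          · show (DTree.node [tpx, DTree.leaf (some (x.getLast hxne))]).height ≤ h₀ + 1
            omega
          · exact hhtall' pr hpr
        obtain ⟨t, htw, htf, hth⟩ := lemUG α epsOf hmul Jc h₀ _
          hfffull hhtfull hhtallfull hH2full hcardfull
        refine ⟨t, by rw [htw, hwordsfull], htf, ?_⟩
        have hmax : max 3 (3 * Jc - 1) = 3 * Jc - 1 := by omega
        omega
    · -- no good cut : binary split
      have hrle : leJ (α w) (α (w.drop c)) := leJ_of_suffix α w hmul c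
      obtain ⟨tr, htrw, htrf, htrh⟩ := IHhigh _ hrle hd
      refine ⟨DTree.node [DTree.node [tpx, DTree.leaf (some (x.getLast hxne))], tr], ?_, ?_, ?_⟩
      · rw [word_node2, htxw, htrw, hx]
        exact List.take_append_drop c w
      · exact isFF_node2 α htxf htrf
      · have h13 := height_node2_le
          (t₁ := DTree.node [tpx, DTree.leaf (some (x.getLast hxne))]) (t₂ := tr)
          (H := h₀) htxh (by omega)
        omega

lemma JupF_card_le (s : S) : (JupF s).card ≤ Fintype.card S := by
  have h1 : (JupF s).card ≤ (Finset.univ : Finset S).card :=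
    Finset.card_le_card (Finset.filter_subset _ _)
  simpa using h1

end MainSec
end SimonFF



/-- Factorization Forest theorem of Simon. -/
theorem simon_factorization_forest
    {S A : Type} [Monoid S] [Fintype S] [Fintype A]
    (α : List A → S) (hα_one : α [] = 1)
    (hα_mul : ∀ u v : List A, α (u ++ v) = α u * α v)
    (w : List A) :
    ∃ t : DTree A, t.word = w ∧ DTree.IsFF α t ∧ t.height ≤ 3 * Fintype.card S := by
  exact SimonFF.mainAux α hα_one hα_mul (Fintype.card S) w (SimonFF.JupF_card_le (α w))
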